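/- arXiv:0911.4596 — 3 statements merged into one kernel-verified Lean document; each statement's English description precedes it below -/
import Mathlib

section
/- Let n, p be positive integers and q an odd integer with q ≥ 3 and 1 ≤ p < q/2. Then the n-th derivative of the function x ↦ sec(πx) = 1/cos(πx) evaluated at x = p/q equals i^{n} · (2πq)^n · Σ_{α=1}^{q} (−1)^{α−1} e^{πi(2α−1)p/q} · E_n((2α−1)/(2q)), where E_n is the n-th Euler polynomial and i = √(−1). -/
open Real Complex Finset

/-- The Euler polynomial `E_n`, expressed through Bernoulli polynomials via the identity
`E_n(x) = (2/(n+1)) * (B_{n+1}(x) - 2^{n+1} * B_{n+1}(x/2))`. -/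
noncomputable def eulerPolyEval (n : ℕ) (x : ℚ) : ℚ :=
  2 / (n + 1) * (Polynomial.eval x (Polynomial.bernoulli (n + 1)) -
    2 ^ (n + 1) * Polynomial.eval (x / 2) (Polynomial.bernoulli (n + 1)))


noncomputable def Bps (t : ℚ) : PowerSeries ℚ :=
  PowerSeries.mk fun n => Polynomial.aeval t ((1 / n.factorial : ℚ) • Polynomial.bernoulli n)

lemma coeff_Bps (t : ℚ) (n : ℕ) :
    (PowerSeries.coeff (R := ℚ) n) (Bps t) = (1 / n.factorial : ℚ) * (Polynomial.bernoulli n).eval t := by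
  simp [Bps, Polynomial.aeval_def, Polynomial.eval₂_eq_eval_map, Polynomial.map_id,
    Algebra.algebraMap_self, smul_eq_mul]

lemma exp_sub_one_ne : (PowerSeries.exp ℚ - 1) ≠ 0 := by
  intro h
  have := congrArg (PowerSeries.coeff (R := ℚ) 1) h
  simp [PowerSeries.coeff_exp, PowerSeries.coeff_one] at this

lemma exp_add_one_ne : (PowerSeries.exp ℚ + 1) ≠ 0 := by
  intro h
  have := congrArg (PowerSeries.constantCoeff (R := ℚ)) h
  simp [PowerSeries.constantCoeff_exp] at this

lemma Bps_gen (t : ℚ) :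
    Bps t * (PowerSeries.exp ℚ - 1) = PowerSeries.X * PowerSeries.rescale t (PowerSeries.exp ℚ) :=
  Polynomial.bernoulli_generating_function t

lemma Bps_shift (t h : ℚ) : Bps (t + h) = Bps t * PowerSeries.rescale h (PowerSeries.exp ℚ) := by
  apply mul_right_cancel₀ exp_sub_one_ne
  rw [Bps_gen, mul_right_comm, Bps_gen, mul_assoc, PowerSeries.exp_mul_exp_eq_exp_add]

lemma Bps_mult2 (t : ℚ) :
    PowerSeries.rescale (2 : ℚ) (Bps t) + PowerSeries.rescale (2 : ℚ) (Bps (t + 1/2)) =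
      2 * Bps (2 * t) := by
  have h2 : PowerSeries.rescale (2 : ℚ) (PowerSeries.exp ℚ) = PowerSeries.exp ℚ ^ 2 := by
    rw [PowerSeries.exp_pow_eq_rescale_exp]; norm_num
  apply mul_right_cancel₀ exp_sub_one_ne
  apply mul_right_cancel₀ exp_add_one_ne
  have key : ∀ s : ℚ, PowerSeries.rescale (2:ℚ) (Bps s) * (PowerSeries.exp ℚ - 1) *
      (PowerSeries.exp ℚ + 1) =
      (PowerSeries.C (R := ℚ) 2 * PowerSeries.X) * PowerSeries.rescale (2*s) (PowerSeries.exp ℚ) := by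
    intro s
    have : (PowerSeries.exp ℚ - 1) * (PowerSeries.exp ℚ + 1)
        = PowerSeries.rescale (2:ℚ) (PowerSeries.exp ℚ - 1) := by
      rw [map_sub, h2, map_one]; ring
    rw [mul_assoc, this, ← map_mul, Bps_gen, map_mul, PowerSeries.rescale_X,
      PowerSeries.rescale_rescale]
    ring_nf
  have hresc : PowerSeries.rescale (2*t + 1) (PowerSeries.exp ℚ)
      = PowerSeries.rescale (2*t) (PowerSeries.exp ℚ) * PowerSeries.exp ℚ := by
    rw [← PowerSeries.exp_mul_exp_eq_exp_add, PowerSeries.rescale_one, RingHom.id_apply]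
  have h212 : 2 * (t + 1/2) = 2*t + 1 := by ring
  have hre : (2: PowerSeries ℚ) * Bps (2*t) * (PowerSeries.exp ℚ + 1) * (PowerSeries.exp ℚ - 1)
      = 2 * (Bps (2*t) * (PowerSeries.exp ℚ - 1)) * (PowerSeries.exp ℚ + 1) := by ring
  rw [add_mul, add_mul, key, key, h212, hresc]
  rw [show (2: PowerSeries ℚ) * Bps (2*t) * (PowerSeries.exp ℚ - 1) * (PowerSeries.exp ℚ + 1)
      = 2 * (Bps (2*t) * (PowerSeries.exp ℚ - 1)) * (PowerSeries.exp ℚ + 1) from by ring, Bps_gen]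
  have hC2 : (PowerSeries.C (R := ℚ) 2) = (2 : PowerSeries ℚ) := map_ofNat _ 2
  rw [hC2]
  ring

lemma bernoulli_eval_add (n : ℕ) (t h : ℚ) :
    (Polynomial.bernoulli n).eval (t + h) =
      ∑ i ∈ range (n+1), (n.choose i : ℚ) * (Polynomial.bernoulli i).eval t * h^(n-i) := by
  have H := congrArg (PowerSeries.coeff (R := ℚ) n) (Bps_shift t h)
  rw [coeff_Bps, PowerSeries.coeff_mul, Nat.sum_antidiagonal_eq_sum_range_succ_mk] at H
  have hn : (n.factorial : ℚ) ≠ 0 := Nat.cast_ne_zero.2 n.factorial_ne_zero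
  have : (Polynomial.bernoulli n).eval (t+h)
      = n.factorial * ((1 / n.factorial : ℚ) * (Polynomial.bernoulli n).eval (t+h)) := by
    field_simp
  rw [this, H, mul_sum]
  refine Finset.sum_congr rfl fun i hi => ?_
  have hi' : i ≤ n := Nat.lt_succ_iff.mp (Finset.mem_range.mp hi)
  rw [coeff_Bps, PowerSeries.coeff_rescale, PowerSeries.coeff_exp,
    Nat.cast_choose ℚ hi']
  have h1 : ((i.factorial : ℚ)) ≠ 0 := Nat.cast_ne_zero.2 i.factorial_ne_zero
  have h2 : (((n-i).factorial : ℚ)) ≠ 0 := Nat.cast_ne_zero.2 (n-i).factorial_ne_zero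
  have : algebraMap ℚ ℚ (1 / ((n-i).factorial : ℚ)) = 1 / ((n-i).factorial : ℚ) := rfl
  rw [this]
  field_simp

lemma bernoulli_eval_mult2 (n : ℕ) (t : ℚ) :
    2^n * ((Polynomial.bernoulli n).eval t + (Polynomial.bernoulli n).eval (t + 1/2)) =
      2 * (Polynomial.bernoulli n).eval (2*t) := by
  have H := congrArg (PowerSeries.coeff (R := ℚ) n) (Bps_mult2 t)
  rw [map_add, PowerSeries.coeff_rescale, PowerSeries.coeff_rescale, coeff_Bps, coeff_Bps,
    show (2 : PowerSeries ℚ) = PowerSeries.C (R := ℚ) 2 from (map_ofNat _ 2).symm,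
    PowerSeries.coeff_C_mul, coeff_Bps] at H
  have hn : (n.factorial : ℚ) ≠ 0 := Nat.cast_ne_zero.2 n.factorial_ne_zero
  set a := (Polynomial.bernoulli n).eval t
  set b := (Polynomial.bernoulli n).eval (t + 1/2)
  set c := (Polynomial.bernoulli n).eval (2*t)
  field_simp at H
  linarith [H]

lemma euler_add_one (n : ℕ) (y : ℚ) : eulerPolyEval n (y + 1) + eulerPolyEval n y = 2 * y ^ n := by
  have h1 : (Polynomial.bernoulli (n+1)).eval (y+1)
      = (Polynomial.bernoulli (n+1)).eval y + ((n:ℚ)+1) * y^n := by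
    have := Polynomial.bernoulli_eval_one_add (n+1) y
    rw [show (1:ℚ) + y = y + 1 by ring] at this
    simpa using this
  have h2 : 2^(n+1) * ((Polynomial.bernoulli (n+1)).eval (y/2)
      + (Polynomial.bernoulli (n+1)).eval (y/2 + 1/2))
      = 2 * (Polynomial.bernoulli (n+1)).eval y := by
    have := bernoulli_eval_mult2 (n+1) (y/2)
    rw [show 2*(y/2) = y by ring] at this
    exact this
  have h3 : (y+1)/2 = y/2 + 1/2 := by ring
  have hn1 : ((n:ℚ)+1) ≠ 0 := by positivity
  have key : Polynomial.eval (y+1) (Polynomial.bernoulli (n+1))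
      - 2^(n+1) * Polynomial.eval (y/2+1/2) (Polynomial.bernoulli (n+1))
      + (Polynomial.eval y (Polynomial.bernoulli (n+1))
      - 2^(n+1) * Polynomial.eval (y/2) (Polynomial.bernoulli (n+1))) = ((n:ℚ)+1) * y^n := by
    linear_combination h1 - h2
  rw [eulerPolyEval, eulerPolyEval, h3, ← mul_add]
  rw [key]
  field_simp

lemma euler_sum_choose (n : ℕ) (y : ℚ) :
    ∑ k ∈ range (n+1), (n.choose k : ℚ) * eulerPolyEval k y = eulerPolyEval n (y + 1) := by
  have hstep : ∀ k, k ≤ n → (n.choose k : ℚ) * eulerPolyEval k y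
      = 2 / ((n:ℚ)+1) * (((n+1).choose (k+1) : ℚ) *
        (Polynomial.eval y (Polynomial.bernoulli (k+1))
          - 2^(k+1) * Polynomial.eval (y/2) (Polynomial.bernoulli (k+1)))) := by
    intro k _
    have hc : ((k:ℚ)+1) * ((n+1).choose (k+1) : ℚ) = ((n:ℚ)+1) * (n.choose k : ℚ) := by
      have h := congrArg (Nat.cast : ℕ → ℚ) (Nat.add_one_mul_choose_eq n k)
      push_cast at h
      linarith [h]
    have hk1 : ((k:ℚ)+1) ≠ 0 := by positivity
    have hn1 : ((n:ℚ)+1) ≠ 0 := by positivity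
    rw [eulerPolyEval]
    field_simp
    linear_combination (-Polynomial.eval y (Polynomial.bernoulli (k+1))
      + 2 * 2^k * Polynomial.eval (y/2) (Polynomial.bernoulli (k+1))) * hc
  rw [Finset.sum_congr rfl (fun k hk => hstep k (Nat.lt_succ_iff.mp (Finset.mem_range.mp hk)))]
  rw [← Finset.mul_sum]
  -- reindex : ∑_{k ∈ range (n+1)} g (k+1) = ∑_{j ∈ range (n+2)} g j  -  g 0, with g 0 = 0
  have hre : ∑ k ∈ range (n+1), (((n+1).choose (k+1) : ℚ) *
        (Polynomial.eval y (Polynomial.bernoulli (k+1))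
          - 2^(k+1) * Polynomial.eval (y/2) (Polynomial.bernoulli (k+1))))
      = ∑ j ∈ range (n+2), (((n+1).choose j : ℚ) *
        (Polynomial.eval y (Polynomial.bernoulli j)
          - 2^j * Polynomial.eval (y/2) (Polynomial.bernoulli j))) := by
    rw [Finset.sum_range_succ' _ (n+1)]
    simp
  rw [hre]
  have hB1 : ∑ j ∈ range (n+2), ((n+1).choose j : ℚ) * Polynomial.eval y (Polynomial.bernoulli j)
      = Polynomial.eval (y+1) (Polynomial.bernoulli (n+1)) := by
    have := bernoulli_eval_add (n+1) y 1
    simpa using this.symm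
  have hB2 : ∑ j ∈ range (n+2), ((n+1).choose j : ℚ) *
        (2^j * Polynomial.eval (y/2) (Polynomial.bernoulli j))
      = 2^(n+1) * Polynomial.eval (y/2 + 1/2) (Polynomial.bernoulli (n+1)) := by
    have H := bernoulli_eval_add (n+1) (y/2) (1/2)
    rw [H, Finset.mul_sum]
    refine Finset.sum_congr rfl fun i hi => ?_
    have hi' : i ≤ n+1 := Nat.lt_succ_iff.mp (Finset.mem_range.mp hi)
    have hpow : (2:ℚ)^(n+1) * (1/2)^(n+1-i) = 2^i := by
      have h2 : (2:ℚ)^(n+1) = 2^(n+1-i) * 2^i := by rw [← pow_add, Nat.sub_add_cancel hi']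
      rw [div_pow, one_pow, h2]
      field_simp
    rw [← hpow]
    ring
  simp only [mul_sub]
  rw [Finset.sum_sub_distrib, hB1, hB2, eulerPolyEval,
    show (y+1)/2 = y/2 + 1/2 by ring]

lemma euler_rec (n : ℕ) (y : ℚ) :
    (∑ k ∈ range (n+1), (n.choose k : ℚ) * eulerPolyEval k y) + eulerPolyEval n y = 2 * y ^ n := by
  rw [euler_sum_choose]
  exact euler_add_one n y

lemma deriv_ofReal_comp (f : ℝ → ℝ) (x : ℝ) :
    deriv (fun y => ((f y : ℝ) : ℂ)) x = ((deriv f x : ℝ) : ℂ) := by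
  by_cases h : DifferentiableAt ℝ f x
  · exact h.hasDerivAt.ofReal_comp.deriv
  · have h' : ¬ DifferentiableAt ℝ (fun y => ((f y : ℝ) : ℂ)) x := by
      intro hc
      apply h
      have := (Complex.reCLM.differentiable.differentiableAt).comp x hc
      have h3 : DifferentiableAt ℝ (fun y => (((f y : ℝ) : ℂ)).re) x := this
      simp only [Complex.ofReal_re] at h3
      exact h3
    rw [deriv_zero_of_not_differentiableAt h, deriv_zero_of_not_differentiableAt h']
    simp

lemma iteratedDeriv_ofReal (f : ℝ → ℝ) (n : ℕ) :
    iteratedDeriv n (fun y => ((f y : ℝ) : ℂ)) = fun y => ((iteratedDeriv n f y : ℝ) : ℂ) := by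
  induction n with
  | zero => simp
  | succ n ih =>
    rw [iteratedDeriv_succ, ih, iteratedDeriv_succ]
    funext x
    exact deriv_ofReal_comp _ x

lemma expsum_hasDerivAt {ι : Type*} (s : Finset ι) (c w : ι → ℂ) (x : ℝ) :
    HasDerivAt (fun y : ℝ => ∑ i ∈ s, c i * Complex.exp (w i * y))
      (∑ i ∈ s, c i * w i * Complex.exp (w i * x)) x := by
  apply HasDerivAt.fun_sum
  intro i _
  have h1 : HasDerivAt (fun y : ℝ => (w i) * (y : ℂ)) (w i) x := by
    simpa using (Complex.ofRealCLM.hasDerivAt (x := x)).const_mul (w i)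
  have h2 := h1.cexp.const_mul (c i)
  exact h2.congr_deriv (by ring)

lemma iteratedDeriv_expsum {ι : Type*} (s : Finset ι) (c w : ι → ℂ) (n : ℕ) :
    iteratedDeriv n (fun y : ℝ => ∑ i ∈ s, c i * Complex.exp (w i * y))
      = fun y : ℝ => ∑ i ∈ s, c i * (w i) ^ n * Complex.exp (w i * (y : ℂ)) := by
  induction n with
  | zero => simp
  | succ n ih =>
    rw [iteratedDeriv_succ, ih]
    funext x
    rw [(expsum_hasDerivAt s (fun i => c i * w i ^ n) w x).deriv]
    exact Finset.sum_congr rfl fun i _ => by ring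

lemma expsum_contDiff {ι : Type*} (s : Finset ι) (c w : ι → ℂ) :
    ContDiff ℝ ⊤ (fun y : ℝ => ∑ i ∈ s, c i * Complex.exp (w i * y)) := by
  apply ContDiff.sum
  intro i _
  have h1 : ContDiff ℝ ⊤ (fun y : ℝ => (w i) * (y : ℂ)) :=
    contDiff_const.mul Complex.ofRealCLM.contDiff
  exact contDiff_const.mul h1.cexp

lemma geom_odd {q : ℕ} (hq : Odd q) (z : ℂ) :
    (1 + z ^ 2) * ∑ α ∈ Finset.Icc 1 q, (-1 : ℂ) ^ (α - 1) * z ^ (2 * α - 1)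
      = z * (1 + z ^ (2 * q)) := by
  have hre : ∑ α ∈ Finset.Icc 1 q, (-1 : ℂ) ^ (α - 1) * z ^ (2 * α - 1)
      = ∑ β ∈ range q, (-z ^ 2) ^ β * z := by
    rw [← Finset.Ico_add_one_right_eq_Icc, Finset.sum_Ico_eq_sum_range]
    refine Finset.sum_congr (by norm_num) fun β _ => ?_
    have h1 : 1 + β - 1 = β := by omega
    have h2 : 2 * (1 + β) - 1 = 2 * β + 1 := by omega
    rw [h1, h2, show (-z ^ 2) = (-1) * z ^ 2 from by ring, mul_pow, ← pow_mul, pow_succ]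
    ring
  have key : (∑ β ∈ range q, (-z ^ 2) ^ β) * (1 + z ^ 2) = 1 + z ^ (2 * q) := by
    have h1 : (1 + z ^ 2 : ℂ) = -((-z ^ 2) - 1) := by ring
    rw [h1, mul_neg, geom_sum_mul, hq.neg_pow, pow_mul]
    ring
  rw [hre, ← Finset.sum_mul,
    show (1 + z ^ 2) * ((∑ β ∈ range q, (-z ^ 2) ^ β) * z)
      = ((∑ β ∈ range q, (-z ^ 2) ^ β) * (1 + z ^ 2)) * z from by ring, key]
  ring

lemma differentiableAt_iteratedDeriv_of_contDiffOn {s : Set ℝ} (hs : IsOpen s) {f : ℝ → ℂ}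
    (hf : ContDiffOn ℝ ⊤ f s) (k : ℕ) {y : ℝ} (hy : y ∈ s) :
    DifferentiableAt ℝ (iteratedDeriv k f) y := by
  have h1 : DifferentiableOn ℝ (iteratedDerivWithin k f s) s :=
    hf.differentiableOn_iteratedDerivWithin (by simp)
      hs.uniqueDiffOn
  have heq : Set.EqOn (iteratedDerivWithin k f s) (iteratedDeriv k f) s := fun z hz => by
    rw [iteratedDerivWithin_eq_iteratedFDerivWithin, iteratedDeriv_eq_iteratedFDeriv,
      iteratedFDerivWithin_of_isOpen k hs hz]
  have hev : iteratedDerivWithin k f s =ᶠ[nhds y] iteratedDeriv k f :=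
    Filter.eventuallyEq_of_mem (hs.mem_nhds hy) fun z hz => heq hz
  exact hev.differentiableAt_iff.mp ((h1 y hy).differentiableAt (hs.mem_nhds hy))

lemma iteratedDeriv_mul_of_contDiffOn {s : Set ℝ} (hs : IsOpen s) {f g : ℝ → ℂ}
    (hf : ContDiffOn ℝ ⊤ f s) (hg : ContDiff ℝ ⊤ g) (n : ℕ) :
    ∀ x ∈ s, iteratedDeriv n (fun y => f y * g y) x =
      ∑ k ∈ range (n + 1),
        (n.choose k : ℂ) * iteratedDeriv k f x * iteratedDeriv (n - k) g x := by
  induction n with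
  | zero => intro x _; simp
  | succ n ih =>
    intro x hx
    have hdg : ∀ m : ℕ, Differentiable ℝ (iteratedDeriv m g) := fun m =>
      hg.differentiable_iteratedDeriv m (by simp)
    have hdf : ∀ k, DifferentiableAt ℝ (iteratedDeriv k f) x := fun k =>
      differentiableAt_iteratedDeriv_of_contDiffOn hs hf k hx
    rw [iteratedDeriv_succ]
    have hev : iteratedDeriv n (fun y => f y * g y) =ᶠ[nhds x]
        (fun y => ∑ k ∈ range (n + 1),
          (n.choose k : ℂ) * iteratedDeriv k f y * iteratedDeriv (n - k) g y) :=
      Filter.eventuallyEq_of_mem (hs.mem_nhds hx) fun y hy => ih y hy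
    rw [hev.deriv_eq, deriv_fun_sum fun k _ =>
      (((hdf k).const_mul _).fun_mul ((hdg (n - k)).differentiableAt))]
    have hterm : ∀ k ∈ range (n + 1),
        deriv (fun y => (n.choose k : ℂ) * iteratedDeriv k f y * iteratedDeriv (n - k) g y) x
        = (n.choose k : ℂ) * iteratedDeriv (k + 1) f x * iteratedDeriv (n - k) g x
          + (n.choose k : ℂ) * iteratedDeriv k f x * iteratedDeriv (n - k + 1) g x := by
      intro k _
      have h := (((hdf k).hasDerivAt.const_mul ((n.choose k : ℂ))).fun_mul
        ((hdg (n - k)) x).hasDerivAt).deriv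
      rw [h, iteratedDeriv_succ, iteratedDeriv_succ]
    rw [Finset.sum_congr rfl hterm, Finset.sum_add_distrib]
    -- now Pascal reindexing
    have hgidx : ∀ k ∈ range (n + 1), (n.choose k : ℂ) * iteratedDeriv k f x
          * iteratedDeriv (n - k + 1) g x
        = (n.choose k : ℂ) * iteratedDeriv k f x * iteratedDeriv (n + 1 - k) g x := by
      intro k hk
      have : n - k + 1 = n + 1 - k := by
        have := Nat.lt_succ_iff.mp (Finset.mem_range.mp hk); omega
      rw [this]
    rw [Finset.sum_congr rfl hgidx]
    have hS2 : ∑ k ∈ range (n + 1),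
          (n.choose k : ℂ) * iteratedDeriv k f x * iteratedDeriv (n + 1 - k) g x
        = ∑ k ∈ range (n + 2),
          (n.choose k : ℂ) * iteratedDeriv k f x * iteratedDeriv (n + 1 - k) g x := by
      rw [Finset.sum_range_succ _ (n + 1), Nat.choose_succ_self, Nat.cast_zero, zero_mul,
        zero_mul, add_zero]
    rw [hS2]
    rw [show ∑ k ∈ range (n + 2),
          ((n + 1).choose k : ℂ) * iteratedDeriv k f x * iteratedDeriv (n + 1 - k) g x
        = ∑ k ∈ range (n + 1),
            ((n + 1).choose (k + 1) : ℂ) * iteratedDeriv (k + 1) f x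
              * iteratedDeriv (n + 1 - (k + 1)) g x
          + ((n + 1).choose 0 : ℂ) * iteratedDeriv 0 f x * iteratedDeriv (n + 1 - 0) g x
        from Finset.sum_range_succ' _ (n + 1)]
    rw [show ∑ k ∈ range (n + 2),
          ((n : ℕ).choose k : ℂ) * iteratedDeriv k f x * iteratedDeriv (n + 1 - k) g x
        = ∑ k ∈ range (n + 1),
            ((n : ℕ).choose (k + 1) : ℂ) * iteratedDeriv (k + 1) f x
              * iteratedDeriv (n + 1 - (k + 1)) g x
          + ((n : ℕ).choose 0 : ℂ) * iteratedDeriv 0 f x * iteratedDeriv (n + 1 - 0) g x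
        from Finset.sum_range_succ' _ (n + 1)]
    simp only [Nat.succ_sub_succ]
    rw [← add_assoc, ← Finset.sum_add_distrib]
    congr 1
    · refine Finset.sum_congr rfl fun k _ => ?_
      have hch : ((n.choose k : ℂ) + (n.choose (k + 1) : ℂ)) = (((n + 1).choose (k + 1) : ℕ) : ℂ) := by
        rw [← Nat.cast_add, Nat.choose_succ_succ n k]
      linear_combination (iteratedDeriv (k + 1) f x * iteratedDeriv (n - k) g x) * hch
    · norm_num

lemma iteratedDeriv_cexp (c : ℂ) (m : ℕ) :
    iteratedDeriv m (fun x : ℝ => Complex.exp (c * (x : ℂ)))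
      = fun x : ℝ => c ^ m * Complex.exp (c * (x : ℂ)) := by
  induction m with
  | zero => simp
  | succ m ih =>
    rw [iteratedDeriv_succ, ih]
    funext x
    have h1 : HasDerivAt (fun y : ℝ => c * (y : ℂ)) c x := by
      simpa using (Complex.ofRealCLM.hasDerivAt (x := x)).const_mul c
    rw [(h1.cexp.const_mul (c ^ m)).deriv]
    ring

noncomputable def secTT (p q k : ℕ) : ℂ :=
  ∑ α ∈ Finset.Icc 1 q,
    (-1 : ℂ) ^ (α - 1) * Complex.exp (Real.pi * Complex.I * (2 * α - 1) * p / q) *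
      ((eulerPolyEval k (((2 * α - 1 : ℕ) : ℚ) / (2 * q)) : ℚ) : ℂ)

lemma secTT_rel (p q : ℕ) (hq0 : 0 < q) (m : ℕ) :
    2 * ((2 * (Real.pi : ℂ) * Complex.I * q) ^ m * secTT p q m) +
      ∑ k ∈ range m, (m.choose k : ℂ) * (2 * (Real.pi : ℂ) * Complex.I * q) ^ (m - k) *
        ((2 * (Real.pi : ℂ) * Complex.I * q) ^ k * secTT p q k)
    = ∑ α ∈ Finset.Icc 1 q, ((-1 : ℂ) ^ (α - 1) * 2) *
        (((2 * α - 1 : ℕ) : ℂ) * ((Real.pi : ℂ) * Complex.I)) ^ m *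
        Complex.exp (Real.pi * Complex.I * (2 * α - 1) * p / q) := by
  have hqC : (q : ℂ) ≠ 0 := Nat.cast_ne_zero.mpr (by omega)
  set c₀ : ℂ := 2 * (Real.pi : ℂ) * Complex.I * q with hc₀
  have hstep : ∀ k ∈ range m, (m.choose k : ℂ) * c₀ ^ (m - k) * (c₀ ^ k * secTT p q k)
      = ∑ α ∈ Finset.Icc 1 q, (m.choose k : ℂ) * c₀ ^ m *
          ((-1 : ℂ) ^ (α - 1) * Complex.exp (Real.pi * Complex.I * (2 * α - 1) * p / q) *
            ((eulerPolyEval k (((2 * α - 1 : ℕ) : ℚ) / (2 * q)) : ℚ) : ℂ)) := by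
    intro k hk
    have hkm : k ≤ m := le_of_lt (Finset.mem_range.mp hk)
    have hpow : c₀ ^ (m - k) * c₀ ^ k = c₀ ^ m := by
      rw [← pow_add, Nat.sub_add_cancel hkm]
    rw [secTT]
    simp only [Finset.mul_sum]
    refine Finset.sum_congr rfl fun α _ => ?_
    rw [← hpow]
    ring
  rw [Finset.sum_congr rfl hstep, Finset.sum_comm, secTT]
  simp only [Finset.mul_sum]
  rw [← Finset.sum_add_distrib]
  refine Finset.sum_congr rfl fun α _ => ?_
  set y : ℚ := ((2 * α - 1 : ℕ) : ℚ) / (2 * q) with hy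
  have hrec := congrArg (Rat.cast : ℚ → ℂ) (euler_rec m y)
  push_cast at hrec
  rw [Finset.sum_range_succ, Nat.choose_self, Nat.cast_one, one_mul] at hrec
  have hcw : c₀ * (y : ℂ) = ((2 * α - 1 : ℕ) : ℂ) * ((Real.pi : ℂ) * Complex.I) := by
    rw [hy, hc₀]
    push_cast
    field_simp
  have hwm : (((2 * α - 1 : ℕ) : ℂ) * ((Real.pi : ℂ) * Complex.I)) ^ m
      = c₀ ^ m * ((y : ℚ) : ℂ) ^ m := by
    rw [← hcw, mul_pow]
  rw [hwm]
  set E : ℕ → ℂ := fun k => ((eulerPolyEval k y : ℚ) : ℂ) with hE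
  set X : ℂ := Complex.exp (Real.pi * Complex.I * (2 * α - 1) * p / q) with hX
  -- hrec : ∑ k ∈ range m, ↑(choose) * E k + E m + E m = 2 * y^m
  have hsum : ∑ k ∈ range m, (m.choose k : ℂ) * c₀ ^ m * ((-1:ℂ)^(α-1) * X * E k)
      = ((-1:ℂ)^(α-1) * X * c₀ ^ m) * (∑ k ∈ range m, (m.choose k : ℂ) * E k) := by
    rw [Finset.mul_sum]
    exact Finset.sum_congr rfl fun k _ => by ring
  rw [hsum]
  have hrec' : ∑ k ∈ range m, (m.choose k : ℂ) * E k = 2 * ((y : ℚ) : ℂ) ^ m - 2 * E m := by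
    rw [hE]
    push_cast
    linear_combination hrec
  rw [hrec']
  ring

/-- **Theorem 2(ii), odd case** (Cvijović): closed form for the derivatives of the secant
function at rational multiples of π with odd denominator, in terms of Euler polynomials. -/
theorem iteratedDeriv_sec_ratPi_odd (n p q : ℕ) (hn : 0 < n) (hp : 1 ≤ p)
    (hq : Odd q) (hq3 : 3 ≤ q) (hpq : 2 * p < q) :
    ((iteratedDeriv n (fun x : ℝ => 1 / Real.cos (Real.pi * x)) ((p : ℝ) / q) : ℝ) : ℂ) =
      Complex.I ^ n * (2 * Real.pi * q) ^ n *
        ∑ α ∈ Finset.Icc 1 q,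
          (-1 : ℂ) ^ (α - 1) * Complex.exp (Real.pi * Complex.I * (2 * α - 1) * p / q) *
            ((eulerPolyEval n (((2 * α - 1 : ℕ) : ℚ) / (2 * q)) : ℚ) : ℂ) := by
  classical
  have hq0 : 0 < q := by omega
  have hqR : (0 : ℝ) < q := by exact_mod_cast hq0
  have hqC : (q : ℂ) ≠ 0 := Nat.cast_ne_zero.mpr (by omega)
  set a : ℝ := (p : ℝ) / q with ha_def
  have haC : ((a : ℝ) : ℂ) = (p : ℂ) / (q : ℂ) := by
    rw [ha_def]; push_cast; ring
  set c₀ : ℂ := 2 * (Real.pi : ℂ) * Complex.I * q with hc₀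
  set w : ℕ → ℂ := fun α => ((2 * α - 1 : ℕ) : ℂ) * ((Real.pi : ℂ) * Complex.I) with hw
  set cN : ℕ → ℂ := fun α => (-1 : ℂ) ^ (α - 1) * 2 with hcN
  set F : ℝ → ℂ := fun x => ((1 / Real.cos (Real.pi * x) : ℝ) : ℂ) with hF
  set G : ℝ → ℂ := fun x => Complex.exp (c₀ * (x : ℂ)) + 1 with hG
  set N : ℝ → ℂ := fun x => ∑ α ∈ Finset.Icc 1 q, cN α * Complex.exp (w α * (x : ℂ)) with hN
  have hpi := Real.pi_pos
  -- the point a lies in (0, 1/2)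
  have hpR : (0 : ℝ) < p := by exact_mod_cast hp
  have ha0 : 0 < a := div_pos hpR hqR
  have ha2 : a < 1 / 2 := by
    rw [ha_def, div_lt_iff₀ hqR]
    have : (2 * p : ℝ) < q := by exact_mod_cast hpq
    linarith
  have hacos : Real.cos (Real.pi * a) ≠ 0 := by
    refine ne_of_gt (Real.cos_pos_of_mem_Ioo ⟨?_, ?_⟩)
    · nlinarith
    · nlinarith
  have hcont : Continuous fun x : ℝ => Real.cos (Real.pi * x) :=
    Real.continuous_cos.comp (continuous_const.mul continuous_id)
  have hUopen : IsOpen {x : ℝ | Real.cos (Real.pi * x) ≠ 0} :=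
    isOpen_ne.preimage hcont
  have haU : a ∈ {x : ℝ | Real.cos (Real.pi * x) ≠ 0} := hacos
  -- smoothness
  have hFs : ContDiffOn ℝ ⊤ F {x : ℝ | Real.cos (Real.pi * x) ≠ 0} := by
    intro x hx
    have h1 : ContDiffAt ℝ ⊤ (fun y : ℝ => Real.cos (Real.pi * y)) x :=
      (Real.contDiff_cos.comp (contDiff_const.mul contDiff_id)).contDiffAt
    have h2 : ContDiffAt ℝ ⊤ (fun y : ℝ => 1 / Real.cos (Real.pi * y)) x := by
      simp only [one_div]
      exact h1.inv hx
    exact (Complex.ofRealCLM.contDiff.contDiffAt.comp x h2).contDiffWithinAt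
  have hGs : ContDiff ℝ ⊤ G := by
    rw [hG]
    exact ((contDiff_const.mul Complex.ofRealCLM.contDiff).cexp).add contDiff_const
  have hexp1 : Complex.exp (c₀ * (a : ℂ)) = 1 := by
    have harg : c₀ * (a : ℂ) = (p : ℕ) * (2 * (Real.pi : ℂ) * Complex.I) := by
      rw [hc₀, haC]
      field_simp
    rw [harg]
    exact Complex.exp_nat_mul_two_pi_mul_I p
  -- the key local identity N = F * G on the set where cos ≠ 0
  have hkey : ∀ x ∈ {x : ℝ | Real.cos (Real.pi * x) ≠ 0}, N x = F x * G x := by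
    intro x hx
    have hx' : Real.cos (Real.pi * x) ≠ 0 := hx
    have hcC : ((Real.cos (Real.pi * x) : ℝ) : ℂ) ≠ 0 := by exact_mod_cast hx'
    set z : ℂ := Complex.exp ((Real.pi : ℂ) * Complex.I * x) with hz
    have hzne : z ≠ 0 := Complex.exp_ne_zero _
    have hzpow : ∀ m : ℕ, z ^ m = Complex.exp ((m : ℂ) * ((Real.pi : ℂ) * Complex.I * x)) := by
      intro m
      rw [hz, ← Complex.exp_nat_mul]
    set S : ℂ := ∑ α ∈ Finset.Icc 1 q, (-1 : ℂ) ^ (α - 1) * z ^ (2 * α - 1) with hS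
    have hNz : N x = 2 * S := by
      have hNx : N x = ∑ α ∈ Finset.Icc 1 q, cN α * Complex.exp (w α * (x : ℂ)) := by rw [hN]
      rw [hNx, hS, Finset.mul_sum]
      refine Finset.sum_congr rfl fun α _ => ?_
      simp only [hcN, hw]
      rw [hzpow (2 * α - 1),
        show (((2 * α - 1 : ℕ) : ℂ) * ((Real.pi : ℂ) * Complex.I)) * (x : ℂ)
          = ((2 * α - 1 : ℕ) : ℂ) * ((Real.pi : ℂ) * Complex.I * x) from by ring]
      ring
    have hC : ((Real.cos (Real.pi * x) : ℝ) : ℂ) = Complex.cos ((Real.pi : ℂ) * x) := by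
      rw [← Complex.ofReal_mul, Complex.ofReal_cos]
    have e1 : z * Complex.exp (((Real.pi : ℂ) * x) * Complex.I) = z ^ 2 := by
      rw [hz, ← Complex.exp_add, sq, ← Complex.exp_add]
      congr 1
      ring
    have e2 : z * Complex.exp ((-((Real.pi : ℂ) * x)) * Complex.I) = 1 := by
      rw [hz, ← Complex.exp_add,
        show (Real.pi : ℂ) * Complex.I * x + (-((Real.pi : ℂ) * x)) * Complex.I = 0 from by ring,
        Complex.exp_zero]
    have hcos2 : (1 : ℂ) + z ^ 2 = z * (2 * ((Real.cos (Real.pi * x) : ℝ) : ℂ)) := by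
      rw [hC, Complex.two_cos, mul_add, e1, e2]
      ring
    have hge := geom_odd hq z
    have h3 : z * ((2 * ((Real.cos (Real.pi * x) : ℝ) : ℂ)) * S) = z * (1 + z ^ (2 * q)) := by
      rw [← hge, hS, hcos2]
      ring
    have h4 : (2 * ((Real.cos (Real.pi * x) : ℝ) : ℂ)) * S = 1 + z ^ (2 * q) :=
      mul_left_cancel₀ hzne h3
    have hGz : G x = 1 + z ^ (2 * q) := by
      have hGx : G x = Complex.exp (c₀ * (x : ℂ)) + 1 := by rw [hG]
      rw [hGx, hzpow (2 * q), hc₀,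
        show (2 * (Real.pi : ℂ) * Complex.I * q) * (x : ℂ)
          = ((2 * q : ℕ) : ℂ) * ((Real.pi : ℂ) * Complex.I * x) from by push_cast; ring]
      ring
    have hFc : F x * ((Real.cos (Real.pi * x) : ℝ) : ℂ) = 1 := by
      have hFx : F x = ((1 / Real.cos (Real.pi * x) : ℝ) : ℂ) := by rw [hF]
      rw [hFx, Complex.ofReal_div, Complex.ofReal_one]
      exact one_div_mul_cancel hcC
    apply mul_right_cancel₀ hcC
    calc N x * ((Real.cos (Real.pi * x) : ℝ) : ℂ)
        = (2 * ((Real.cos (Real.pi * x) : ℝ) : ℂ)) * S := by rw [hNz]; ring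
      _ = 1 + z ^ (2 * q) := h4
      _ = G x := hGz.symm
      _ = F x * G x * ((Real.cos (Real.pi * x) : ℝ) : ℂ) := by
          linear_combination (G x) * hFc.symm
  have hev : N =ᶠ[nhds a] fun y => F y * G y :=
    Filter.eventuallyEq_of_mem (hUopen.mem_nhds haU) hkey
  have hDN : ∀ m : ℕ, iteratedDeriv m N a
      = ∑ α ∈ Finset.Icc 1 q, cN α * (w α) ^ m * Complex.exp (w α * (a : ℂ)) := by
    intro m
    rw [hN]
    exact congrFun (iteratedDeriv_expsum (Finset.Icc 1 q) cN w m) a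
  have hGa : G a = 2 := by
    have hGx : G a = Complex.exp (c₀ * (a : ℂ)) + 1 := by rw [hG]
    rw [hGx, hexp1]
    norm_num
  have hGm : ∀ m : ℕ, 0 < m → iteratedDeriv m G a = c₀ ^ m := by
    intro m hm
    obtain ⟨m', rfl⟩ : ∃ m'', m = m'' + 1 := ⟨m - 1, by omega⟩
    have hdG : deriv G = deriv fun x : ℝ => Complex.exp (c₀ * (x : ℂ)) := by
      funext y
      rw [hG]
      exact deriv_add_const 1
    rw [iteratedDeriv_succ', hdG, ← iteratedDeriv_succ']
    simp only [iteratedDeriv_cexp]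
    rw [hexp1, mul_one]
  have harg : ∀ α ∈ Finset.Icc 1 q, (((2 * α - 1 : ℕ) : ℂ) * ((Real.pi : ℂ) * Complex.I)) * (a : ℂ)
      = Real.pi * Complex.I * (2 * α - 1) * p / q := by
    intro α hα
    have hα1 : 1 ≤ α := (Finset.mem_Icc.mp hα).1
    rw [haC]
    have hcast : ((2 * α - 1 : ℕ) : ℂ) = 2 * (α : ℂ) - 1 := by
      have h1 : (1 : ℕ) ≤ 2 * α := by omega
      push_cast [Nat.cast_sub h1]
      ring
    rw [hcast]
    ring
  -- master relation for the derivatives of F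
  have hrelD : ∀ m : ℕ, 2 * iteratedDeriv m F a +
      ∑ k ∈ range m, (m.choose k : ℂ) * c₀ ^ (m - k) * iteratedDeriv k F a
      = ∑ α ∈ Finset.Icc 1 q, ((-1 : ℂ) ^ (α - 1) * 2) *
          (((2 * α - 1 : ℕ) : ℂ) * ((Real.pi : ℂ) * Complex.I)) ^ m *
          Complex.exp (Real.pi * Complex.I * (2 * α - 1) * p / q) := by
    intro m
    have h1 : iteratedDeriv m N a = iteratedDeriv m (fun y => F y * G y) a :=
      hev.iteratedDeriv_eq m
    have h2 := iteratedDeriv_mul_of_contDiffOn hUopen hFs hGs m a haU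
    have h3 : ∑ α ∈ Finset.Icc 1 q, ((-1 : ℂ) ^ (α - 1) * 2) *
          (((2 * α - 1 : ℕ) : ℂ) * ((Real.pi : ℂ) * Complex.I)) ^ m *
          Complex.exp (Real.pi * Complex.I * (2 * α - 1) * p / q)
        = iteratedDeriv m N a := by
      rw [hDN m]
      refine (Finset.sum_congr rfl fun α hα => ?_).symm
      simp only [hcN, hw]
      rw [harg α hα]
    rw [h3, h1, h2, Finset.sum_range_succ, Nat.sub_self, Nat.choose_self, Nat.cast_one,
      iteratedDeriv_zero, hGa]
    have h5 : ∀ k ∈ range m, (m.choose k : ℂ) * iteratedDeriv k F a * iteratedDeriv (m - k) G a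
        = (m.choose k : ℂ) * c₀ ^ (m - k) * iteratedDeriv k F a := by
      intro k hk
      rw [hGm (m - k) (by have := Finset.mem_range.mp hk; omega)]
      ring
    rw [Finset.sum_congr rfl h5]
    ring
  -- strong induction: derivatives of F equal the Euler-polynomial sums
  have main : ∀ m : ℕ, iteratedDeriv m F a = c₀ ^ m * secTT p q m := by
    intro m
    induction m using Nat.strong_induction_on with
    | _ m ih =>
      have e1 := hrelD m
      have e2 := secTT_rel p q hq0 m
      rw [← hc₀] at e2
      have hsum : ∑ k ∈ range m, (m.choose k : ℂ) * c₀ ^ (m - k) * iteratedDeriv k F a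
          = ∑ k ∈ range m, (m.choose k : ℂ) * c₀ ^ (m - k) * (c₀ ^ k * secTT p q k) :=
        Finset.sum_congr rfl fun k hk => by rw [ih k (Finset.mem_range.mp hk)]
      rw [hsum] at e1
      have h2T : 2 * iteratedDeriv m F a = 2 * (c₀ ^ m * secTT p q m) := by
        linear_combination e1 - e2
      exact mul_left_cancel₀ two_ne_zero h2T
  -- conclude
  have hL : ((iteratedDeriv n (fun x : ℝ => 1 / Real.cos (Real.pi * x)) a : ℝ) : ℂ)
      = iteratedDeriv n F a := by
    rw [hF]
    exact (congrFun (iteratedDeriv_ofReal (fun x : ℝ => 1 / Real.cos (Real.pi * x)) n) a).symm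
  rw [hL, main n, hc₀,
    show (2 * (Real.pi : ℂ) * Complex.I * q) ^ n
      = Complex.I ^ n * (2 * (Real.pi : ℂ) * (q : ℂ)) ^ n from by
        rw [show 2 * (Real.pi : ℂ) * Complex.I * (q : ℂ)
            = Complex.I * (2 * (Real.pi : ℂ) * (q : ℂ)) from by ring, mul_pow]]
  simp only [secTT]
end

section
/- Let n, p be positive integers and q an even integer with q ≥ 4 and 1 ≤ p < q/2. Then the n-th derivative of the function x ↦ sec(πx) evaluated at x = p/q equals −i^{n} · (2πq)^n · (2/(n+1)) · Σ_{α=1}^{q} (−1)^{α−1} e^{πi(2α−1)p/q} · B_{n+1}((2α−1)/(2q)), where B_{n+1} is the (n+1)-st Bernoulli polynomial and i = √(−1). -/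
open Real Complex Finset

namespace SecAux


lemma iteratedDerivWithin_isOpen {f : ℝ → ℂ} {s : Set ℝ} (n : ℕ) (hs : IsOpen s)
    {x : ℝ} (hx : x ∈ s) : iteratedDerivWithin n f s x = iteratedDeriv n f x := by
  simp only [iteratedDerivWithin, iteratedDeriv,
    iteratedFDerivWithin_of_isOpen (𝕜 := ℝ) (f := f) n hs hx]

lemma deriv_ofReal_comp (f : ℝ → ℝ) (x : ℝ) :
    deriv (fun t : ℝ => ((f t : ℝ) : ℂ)) x = ((deriv f x : ℝ) : ℂ) := by
  by_cases h : DifferentiableAt ℝ f x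
  · exact (h.hasDerivAt.ofReal_comp).deriv
  · rw [deriv_zero_of_not_differentiableAt h, deriv_zero_of_not_differentiableAt, Complex.ofReal_zero]
    intro hc
    apply h
    have : f = fun t => Complex.reCLM ((fun t : ℝ => ((f t : ℝ) : ℂ)) t) := by
      funext t; simp
    rw [this]
    exact (Complex.reCLM.differentiableAt.comp x hc)

lemma iteratedDeriv_ofReal_comp (n : ℕ) (f : ℝ → ℝ) :
    (fun x => iteratedDeriv n (fun t : ℝ => ((f t : ℝ) : ℂ)) x) =
      fun x => ((iteratedDeriv n f x : ℝ) : ℂ) := by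
  induction n generalizing f with
  | zero => simp [iteratedDeriv_zero]
  | succ n ih =>
    funext x
    rw [iteratedDeriv_succ', iteratedDeriv_succ']
    have : deriv (fun u : ℝ => ((f u : ℝ) : ℂ)) = fun t => ((deriv f t : ℝ) : ℂ) := by
      funext t; exact deriv_ofReal_comp f t
    rw [this]
    exact congrFun (ih (deriv f)) x

lemma iteratedDeriv_cexp_mul (a b : ℂ) (n : ℕ) :
    iteratedDeriv n (fun x : ℝ => b * Complex.exp (a * x)) =
      fun x : ℝ => b * a ^ n * Complex.exp (a * x) := by
  induction n generalizing b with
  | zero => simp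
  | succ n ih =>
    rw [iteratedDeriv_succ']
    have hd : deriv (fun t : ℝ => b * Complex.exp (a * t)) =
        fun x : ℝ => (b * a) * Complex.exp (a * x) := by
      funext x
      have h1 : HasDerivAt (fun z : ℂ => b * Complex.exp (a * z)) (b * (Complex.exp (a * x) * a)) (x : ℂ) := by
        simpa using (((Complex.hasDerivAt_exp (a * x)).comp (x : ℂ)
          ((hasDerivAt_id (x : ℂ)).const_mul a)).const_mul b)
      have := h1.comp_ofReal
      rw [this.deriv]; ring
    rw [hd, ih (b * a)]
    funext x; ring



lemma hasDerivAt_cexp_mul (b a : ℂ) (x : ℝ) :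
    HasDerivAt (fun t : ℝ => b * Complex.exp (a * t)) (b * a * Complex.exp (a * x)) x := by
  have h1 : HasDerivAt (fun z : ℂ => b * Complex.exp (a * z)) (b * (Complex.exp (a * x) * a)) (x : ℂ) := by
    simpa using (((Complex.hasDerivAt_exp (a * x)).comp (x : ℂ)
      ((hasDerivAt_id (x : ℂ)).const_mul a)).const_mul b)
  have := h1.comp_ofReal
  convert this using 1
  ring

lemma iteratedDeriv_sum_exp {A : Finset ℕ} (coef a : ℕ → ℂ) (n : ℕ) :
    iteratedDeriv n (fun x : ℝ => ∑ α ∈ A, coef α * Complex.exp (a α * x)) =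
      fun x : ℝ => ∑ α ∈ A, coef α * (a α) ^ n * Complex.exp (a α * x) := by
  induction n generalizing coef with
  | zero => simp
  | succ n ih =>
    rw [iteratedDeriv_succ']
    have hd : deriv (fun x : ℝ => ∑ α ∈ A, coef α * Complex.exp (a α * x)) =
        fun x : ℝ => ∑ α ∈ A, (coef α * a α) * Complex.exp (a α * x) := by
      funext x
      exact (HasDerivAt.fun_sum fun α _ => hasDerivAt_cexp_mul (coef α) (a α) x).deriv
    rw [hd, ih (fun α => coef α * a α)]
    funext x
    refine Finset.sum_congr rfl fun α _ => ?_
    ring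

lemma leibniz_within {s : Set ℝ} (hs : UniqueDiffOn ℝ s) :
    ∀ (n : ℕ) (f g : ℝ → ℂ), ContDiffOn ℝ (⊤ : ℕ∞) f s → ContDiffOn ℝ (⊤ : ℕ∞) g s → ∀ x ∈ s,
      iteratedDerivWithin n (fun t => f t * g t) s x =
        ∑ k ∈ range (n + 1), (n.choose k : ℂ) *
          iteratedDerivWithin k f s x * iteratedDerivWithin (n - k) g s x := by
  intro n
  induction n with
  | zero => intro f g hf hg x hx; simp
  | succ n IH =>
    intro f g hf hg x hx
    have hf' : ContDiffOn ℝ (⊤ : ℕ∞) (derivWithin f s) s := hf.derivWithin hs (by exact_mod_cast le_top)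
    have hg' : ContDiffOn ℝ (⊤ : ℕ∞) (derivWithin g s) s := hg.derivWithin hs (by exact_mod_cast le_top)
    have heq : Set.EqOn (derivWithin (fun t => f t * g t) s)
        (fun t => derivWithin f s t * g t + f t * derivWithin g s t) s := by
      intro t ht
      exact derivWithin_fun_mul
        ((hf.differentiableOn (by simp)) t ht) ((hg.differentiableOn (by simp)) t ht)
    rw [iteratedDerivWithin_succ', iteratedDerivWithin_congr heq hx]
    have hsum : iteratedDerivWithin n
        (fun t => derivWithin f s t * g t + f t * derivWithin g s t) s x =
        iteratedDerivWithin n (fun t => derivWithin f s t * g t) s x +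
        iteratedDerivWithin n (fun t => f t * derivWithin g s t) s x := by
      have := iteratedDerivWithin_add (f := fun t => derivWithin f s t * g t)
        (g := fun t => f t * derivWithin g s t) (n := n) hx hs
        (((hf'.mul hg).of_le (by exact_mod_cast le_top)) x hx) (((hf.mul hg').of_le (by exact_mod_cast le_top)) x hx)
      simpa [Pi.add_def] using this
    rw [hsum, IH _ _ hf' hg x hx, IH _ _ hf hg' x hx]
    -- rewrite iterated derivs of derivWithin
    have hF : ∀ k, iteratedDerivWithin k (derivWithin f s) s x = iteratedDerivWithin (k+1) f s x :=
      fun k => (congrFun iteratedDerivWithin_succ' x).symm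
    have hG : ∀ k, iteratedDerivWithin k (derivWithin g s) s x = iteratedDerivWithin (k+1) g s x :=
      fun k => (congrFun iteratedDerivWithin_succ' x).symm
    simp only [hF, hG]
    -- now pure combinatorics
    set a : ℕ → ℂ := fun k => iteratedDerivWithin k f s x
    set b : ℕ → ℂ := fun k => iteratedDerivWithin k g s x
    have key : ∑ k ∈ range (n + 1), (n.choose k : ℂ) * a (k+1) * b (n - k) +
        ∑ k ∈ range (n + 1), (n.choose k : ℂ) * a k * b (n - k + 1) =
        ∑ k ∈ range (n + 2), ((n+1).choose k : ℂ) * a k * b (n + 1 - k) := by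
      rw [Finset.sum_range_succ' (fun k => ((n+1).choose k : ℂ) * a k * b (n + 1 - k)) (n+1)]
      have h1 : ∀ k ∈ range (n+1), ((n+1).choose (k+1) : ℂ) * a (k+1) * b (n + 1 - (k+1)) =
          (n.choose k : ℂ) * a (k+1) * b (n - k) + (n.choose (k+1) : ℂ) * a (k+1) * b (n - k) := by
        intro k hk
        have h' : n + 1 - (k + 1) = n - k := by omega
        rw [h', Nat.choose_succ_succ n k]
        push_cast
        ring
      rw [Finset.sum_congr rfl h1, Finset.sum_add_distrib]
      have h2 : ∑ k ∈ range (n+1), (n.choose (k+1) : ℂ) * a (k+1) * b (n - k) +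
          ((n+1).choose 0 : ℂ) * a 0 * b (n + 1 - 0) =
          ∑ k ∈ range (n + 1), (n.choose k : ℂ) * a k * b (n - k + 1) := by
        rw [Finset.sum_range_succ (fun k => (n.choose (k+1) : ℂ) * a (k+1) * b (n - k)) n,
          Finset.sum_range_succ' (fun k => (n.choose k : ℂ) * a k * b (n - k + 1)) n]
        simp only [Nat.choose_succ_self, Nat.cast_zero, zero_mul, add_zero,
          Nat.choose_zero_right, Nat.cast_one, Nat.sub_zero, one_mul]
        congr 1
        refine Finset.sum_congr rfl fun k hk => ?_
        have hk' := Finset.mem_range.1 hk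
        have h3 : n - (k+1) + 1 = n - k := by omega
        rw [h3]
      rw [add_assoc, h2]
    exact key



lemma cos_mul_sum_exp (q : ℕ) (hq : Even q) (x : ℝ) :
    Complex.cos (Real.pi * x) *
      ∑ α ∈ Icc 1 q, (-1 : ℂ) ^ (α - 1) * Complex.exp ((Real.pi * Complex.I * (2 * α - 1)) * x) =
    (1 - Complex.exp ((2 * Real.pi * q * Complex.I) * x)) / 2 := by
  set w : ℂ := Complex.exp (Real.pi * Complex.I * x) with hw_def
  have hw : w ≠ 0 := Complex.exp_ne_zero _
  have hcos : Complex.cos (Real.pi * x) = (w + w⁻¹) / 2 := by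
    rw [Complex.cos, hw_def, ← Complex.exp_neg]
    ring_nf
  have hterm : ∀ α : ℕ, 1 ≤ α →
      Complex.exp ((Real.pi * Complex.I * (2 * α - 1)) * x) = w ^ (2 * α - 1) := by
    intro α hα
    rw [hw_def, ← Complex.exp_nat_mul]
    congr 1
    have h2 : 1 ≤ 2 * α := by omega
    push_cast [Nat.cast_sub h2]
    ring
  have hsum : ∑ α ∈ Icc 1 q, (-1 : ℂ) ^ (α - 1) * Complex.exp ((Real.pi * Complex.I * (2 * α - 1)) * x) =
      ∑ i ∈ range q, (-1 : ℂ) ^ i * w ^ (2 * i + 1) := by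
    rw [← Finset.Ico_add_one_right_eq_Icc, Finset.sum_Ico_eq_sum_range]
    refine Finset.sum_congr (by norm_num) fun i _ => ?_
    rw [hterm (1 + i) (by omega)]
    have e1 : 1 + i - 1 = i := by omega
    have e2 : 2 * (1 + i) - 1 = 2 * i + 1 := by omega
    rw [e1, e2]
  set g : ℕ → ℂ := fun i => -((-1 : ℂ) ^ i * w ^ (2 * i)) with hg_def
  have hkey : ∀ i : ℕ, ((-1 : ℂ) ^ i * w ^ (2 * i + 1)) * (w + w⁻¹) = g (i + 1) - g i := by
    intro i
    have h1 : w ^ (2 * i + 1) * w⁻¹ = w ^ (2 * i) := by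
      rw [pow_succ, mul_assoc, mul_inv_cancel₀ hw, mul_one]
    have h2 : w ^ (2 * i + 1) * w = w ^ (2 * i + 2) := by
      rw [← pow_succ]
    calc ((-1 : ℂ) ^ i * w ^ (2 * i + 1)) * (w + w⁻¹)
        = (-1 : ℂ) ^ i * (w ^ (2 * i + 1) * w) + (-1 : ℂ) ^ i * (w ^ (2 * i + 1) * w⁻¹) := by ring
      _ = (-1 : ℂ) ^ i * w ^ (2 * i + 2) + (-1 : ℂ) ^ i * w ^ (2 * i) := by rw [h1, h2]
      _ = g (i + 1) - g i := by simp only [hg_def]; ring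
  have htel : (∑ i ∈ range q, (-1 : ℂ) ^ i * w ^ (2 * i + 1)) * (w + w⁻¹) = 1 - w ^ (2 * q) := by
    rw [Finset.sum_mul]
    rw [Finset.sum_congr rfl fun i _ => hkey i, Finset.sum_range_sub g]
    simp only [hg_def]
    rw [hq.neg_one_pow]
    ring
  have hwq : w ^ (2 * q) = Complex.exp ((2 * Real.pi * q * Complex.I) * x) := by
    rw [hw_def, ← Complex.exp_nat_mul]
    congr 1
    push_cast
    ring
  rw [hcos, hsum, ← hwq, div_mul_eq_mul_div, mul_comm (w + w⁻¹), htel]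

----------------------------------------------------------------
-- definitions

noncomputable def cc (q : ℕ) : ℂ := 2 * Real.pi * q * Complex.I

noncomputable def aa : ℕ → ℂ := fun α => Real.pi * Complex.I * (2 * α - 1)

noncomputable def coef : ℕ → ℂ := fun α => (-1) ^ (α - 1)

noncomputable def EE (q : ℕ) : ℝ → ℂ := fun x => ∑ α ∈ Icc 1 q, coef α * Complex.exp (aa α * x)

noncomputable def FF : ℝ → ℂ := fun x => ((1 / Real.cos (Real.pi * x) : ℝ) : ℂ)

noncomputable def uu (q : ℕ) : ℝ → ℂ := fun x => (1 - Complex.exp (cc q * x)) / 2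

noncomputable def yy (q : ℕ) : ℕ → ℚ := fun α => ((2 * α - 1 : ℕ) : ℚ) / (2 * q)

noncomputable def SS (p q : ℕ) : ℕ → ℂ := fun m =>
  ∑ α ∈ Icc 1 q, coef α * Complex.exp (aa α * (((p : ℝ) / q : ℝ) : ℂ)) *
    ((Polynomial.eval (yy q α) (Polynomial.bernoulli m) : ℚ) : ℂ)

noncomputable def AA (p q : ℕ) : ℕ → ℂ := fun k =>
  ((iteratedDeriv k (fun x : ℝ => 1 / Real.cos (Real.pi * x)) ((p : ℝ) / q) : ℝ) : ℂ)

def ss : Set ℝ := {x | Real.cos (Real.pi * x) ≠ 0}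

----------------------------------------------------------------
section hyps

variable (p q : ℕ) (hp : 1 ≤ p) (hq : Even q) (hq4 : 4 ≤ q) (hpq : 2 * p < q)

lemma ss_open : IsOpen ss := by
  have h : Continuous fun x : ℝ => Real.cos (Real.pi * x) :=
    Real.continuous_cos.comp (continuous_const.mul continuous_id)
  exact IsOpen.preimage h isOpen_compl_singleton

include hp hq4 hpq in
lemma cos_x0_pos : 0 < Real.cos (Real.pi * ((p : ℝ) / q)) := by
  have hπ := Real.pi_pos
  have hq0 : (0 : ℝ) < q := by exact_mod_cast (by omega : 0 < q)
  have hp0 : (0 : ℝ) < p := by exact_mod_cast (by omega : 0 < p)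
  have h1 : 0 < (p : ℝ) / q := div_pos hp0 hq0
  have h2 : (p : ℝ) / q < 1 / 2 := by
    rw [div_lt_div_iff₀ hq0 (by norm_num)]
    have : (2 : ℝ) * p < q := by exact_mod_cast hpq
    linarith
  apply Real.cos_pos_of_mem_Ioo
  constructor
  · nlinarith
  · nlinarith

include hp hq4 hpq in
lemma x0_mem : ((p : ℝ) / q) ∈ ss := ne_of_gt (cos_x0_pos p q hp hq4 hpq)

lemma FF_cd : ContDiffOn ℝ (⊤ : ℕ∞) FF ss := by
  have hcos : ContDiff ℝ (⊤ : ℕ∞) (fun x : ℝ => Real.cos (Real.pi * x)) :=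
    (Real.contDiff_cos.of_le le_top).comp (contDiff_const.mul contDiff_id)
  have hinv : ContDiffOn ℝ (⊤ : ℕ∞) (fun x : ℝ => (Real.cos (Real.pi * x))⁻¹) ss :=
    hcos.contDiffOn.inv (fun x hx => hx)
  have h2 := (Complex.ofRealCLM.contDiff (n := (⊤ : ℕ∞))).comp_contDiffOn hinv
  exact h2.congr (fun x hx => by simp [FF, Function.comp_def, one_div])

lemma uu_cd : ContDiffOn ℝ (⊤ : ℕ∞) (uu q) ss := by
  have hor : ContDiff ℝ (⊤ : ℕ∞) (fun x : ℝ => (x : ℂ)) := Complex.ofRealCLM.contDiff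
  have hlin : ContDiff ℝ (⊤ : ℕ∞) (fun x : ℝ => cc q * (x : ℂ)) := contDiff_const.mul hor
  have hexpC : ContDiff ℂ (⊤ : ℕ∞) Complex.exp := Complex.contDiff_exp
  have hexp : ContDiff ℝ (⊤ : ℕ∞) (fun x : ℝ => Complex.exp (cc q * x)) :=
    (hexpC.restrict_scalars ℝ).comp hlin
  exact ((contDiff_const.sub hexp).div_const 2).contDiffOn

include hq in
lemma eqOn_FE : Set.EqOn (fun t => FF t * uu q t) (EE q) ss := by
  intro t ht
  have ht' : Real.cos (Real.pi * t) ≠ 0 := ht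
  have hcosC : (Complex.cos ((Real.pi : ℂ) * t) : ℂ) = ((Real.cos (Real.pi * t) : ℝ) : ℂ) := by
    rw [← Complex.ofReal_mul, Complex.ofReal_cos]
  have hct : (Complex.cos ((Real.pi : ℂ) * t) : ℂ) ≠ 0 := by
    rw [hcosC]; exact_mod_cast ht'
  have hkey := cos_mul_sum_exp q hq t
  have hE : Complex.cos ((Real.pi : ℂ) * t) * EE q t = uu q t := by
    simpa [EE, uu, coef, aa, cc] using hkey
  show FF t * uu q t = EE q t
  rw [← hE, FF]
  rw [← mul_assoc]
  have : ((1 / Real.cos (Real.pi * t) : ℝ) : ℂ) * Complex.cos ((Real.pi : ℂ) * t) = 1 := by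
    rw [hcosC, ← Complex.ofReal_mul, one_div, inv_mul_cancel₀ ht']
    simp
  rw [this, one_mul]

include hp hq4 hpq in
lemma exp_cx0 : Complex.exp (cc q * (((p : ℝ) / q : ℝ) : ℂ)) = 1 := by
  have hq0 : (q : ℂ) ≠ 0 := by exact_mod_cast (by omega : q ≠ 0)
  have harg : cc q * (((p : ℝ) / q : ℝ) : ℂ) = (p : ℂ) * (2 * (Real.pi : ℂ) * Complex.I) := by
    rw [cc]
    push_cast
    field_simp
  rw [harg]
  exact_mod_cast Complex.exp_nat_mul_two_pi_mul_I p

include hp hq4 hpq in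
lemma uu_derivs : ∀ j : ℕ, 1 ≤ j →
    iteratedDerivWithin j (uu q) ss (((p : ℝ) / q : ℝ)) = -(cc q ^ j) / 2 := by
  intro j hj
  obtain ⟨j', rfl⟩ : ∃ j'', j = j'' + 1 := ⟨j - 1, by omega⟩
  rw [iteratedDerivWithin_isOpen _ (ss_open) (x0_mem p q hp hq4 hpq), iteratedDeriv_succ']
  have hder : deriv (uu q) = fun x : ℝ => (-(cc q) / 2) * Complex.exp (cc q * x) := by
    funext x
    have h0 : HasDerivAt (fun t : ℝ => Complex.exp (cc q * t)) (cc q * Complex.exp (cc q * x)) x := by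
      have := hasDerivAt_cexp_mul 1 (cc q) x
      simpa using this
    have h1 := (h0.const_sub 1).div_const 2
    have h2 : deriv (uu q) x = -(cc q * Complex.exp (cc q * x)) / 2 := h1.deriv
    rw [h2]; ring
  rw [hder, congrFun (iteratedDeriv_cexp_mul (cc q) (-(cc q) / 2) j') _,
    exp_cx0 p q hp hq4 hpq, pow_succ]
  ring

include hp hq4 hpq in
lemma uu_x0 : uu q (((p : ℝ) / q : ℝ)) = 0 := by
  rw [uu]
  simp only [exp_cx0 p q hp hq4 hpq]
  simp

include hp hq hq4 hpq in
lemma recursion (n : ℕ) :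
    ∑ k ∈ range (n + 1), ((n + 1).choose k : ℂ) * AA p q k * (-(cc q ^ (n + 1 - k)) / 2) =
      ∑ α ∈ Icc 1 q, coef α * aa α ^ (n + 1) * Complex.exp (aa α * (((p : ℝ) / q : ℝ) : ℂ)) := by
  have hx0 := x0_mem p q hp hq4 hpq
  have hsu : UniqueDiffOn ℝ ss := (ss_open).uniqueDiffOn
  have hL := leibniz_within hsu (n + 1) FF (uu q) FF_cd (uu_cd q) ((p : ℝ) / q) hx0
  have hAW : ∀ k, iteratedDerivWithin k FF ss ((p : ℝ) / q) = AA p q k := by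
    intro k
    rw [iteratedDerivWithin_isOpen _ ss_open hx0]
    exact congrFun (iteratedDeriv_ofReal_comp k (fun x => 1 / Real.cos (Real.pi * x))) _
  have hEq : iteratedDerivWithin (n + 1) (EE q) ss ((p : ℝ) / q) =
      ∑ α ∈ Icc 1 q, coef α * aa α ^ (n + 1) * Complex.exp (aa α * (((p : ℝ) / q : ℝ) : ℂ)) := by
    rw [iteratedDerivWithin_isOpen _ ss_open hx0]
    have h := congrFun (iteratedDeriv_sum_exp (A := Icc 1 q) coef aa (n + 1)) ((p : ℝ) / q)
    rw [show EE q = fun x : ℝ => ∑ α ∈ Icc 1 q, coef α * Complex.exp (aa α * x) from rfl]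
    simpa using h
  calc ∑ k ∈ range (n + 1), ((n + 1).choose k : ℂ) * AA p q k * (-(cc q ^ (n + 1 - k)) / 2)
      = ∑ k ∈ range (n + 1), ((n + 1).choose k : ℂ) * iteratedDerivWithin k FF ss ((p : ℝ) / q) *
          iteratedDerivWithin (n + 1 - k) (uu q) ss ((p : ℝ) / q) := by
        refine Finset.sum_congr rfl fun k hk => ?_
        have hk' := Finset.mem_range.1 hk
        rw [hAW k, uu_derivs p q hp hq4 hpq (n + 1 - k) (by omega)]
    _ = ∑ k ∈ range (n + 2), ((n + 1).choose k : ℂ) * iteratedDerivWithin k FF ss ((p : ℝ) / q) *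
          iteratedDerivWithin (n + 1 - k) (uu q) ss ((p : ℝ) / q) := by
        rw [Finset.sum_range_succ (fun k => ((n + 1).choose k : ℂ) *
          iteratedDerivWithin k FF ss ((p : ℝ) / q) *
          iteratedDerivWithin (n + 1 - k) (uu q) ss ((p : ℝ) / q)) (n + 1)]
        have hz : iteratedDerivWithin (n + 1 - (n + 1)) (uu q) ss ((p : ℝ) / q) = 0 := by
          simp only [Nat.sub_self, iteratedDerivWithin_zero]
          exact uu_x0 p q hp hq4 hpq
        rw [hz, mul_zero, add_zero]
    _ = iteratedDerivWithin (n + 1) (fun t => FF t * uu q t) ss ((p : ℝ) / q) := hL.symm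
    _ = iteratedDerivWithin (n + 1) (EE q) ss ((p : ℝ) / q) :=
        iteratedDerivWithin_congr (eqOn_FE q hq) hx0
    _ = _ := hEq

lemma bern_sum (m : ℕ) (z : ℚ) :
    ∑ j ∈ range (m + 2), (((m + 2).choose j : ℕ) : ℂ) *
        ((Polynomial.eval z (Polynomial.bernoulli j) : ℚ) : ℂ)
      = ((m : ℂ) + 2) * ((z : ℂ)) ^ (m + 1) := by
  have h := Polynomial.sum_bernoulli (m + 1)
  have h2 := congrArg (Polynomial.eval z) h
  simp only [Polynomial.eval_finset_sum, Polynomial.eval_smul, Polynomial.eval_monomial,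
    smul_eq_mul] at h2
  exact_mod_cast h2

include hp hq hq4 hpq in
lemma SS_zero : SS p q 0 = 0 := by
  have h1 : SS p q 0 = EE q ((p : ℝ) / q) := by
    simp [SS, EE, Polynomial.bernoulli_zero]
  have h2 := eqOn_FE q hq (x0_mem p q hp hq4 hpq)
  rw [h1, ← h2]
  show FF ((p : ℝ) / q) * uu q ((p : ℝ) / q) = 0
  rw [uu_x0 p q hp hq4 hpq, mul_zero]

include hq4 in
lemma aa_eq_cc_mul_y : ∀ α : ℕ, 1 ≤ α → aa α = cc q * ((yy q α : ℚ) : ℂ) := by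
  intro α hα
  have hq0 : (q : ℂ) ≠ 0 := by exact_mod_cast (by omega : q ≠ 0)
  have hy : ((yy q α : ℚ) : ℂ) = (2 * (α : ℂ) - 1) / (2 * q) := by
    rw [yy]
    push_cast [Nat.cast_sub (show 1 ≤ 2 * α by omega)]
    ring
  rw [aa, cc, hy]
  field_simp

include hq4 in
lemma cc_ne_zero : cc q ≠ 0 := by
  rw [cc]
  have hq0 : (q : ℂ) ≠ 0 := by exact_mod_cast (by omega : q ≠ 0)
  have hπ : (Real.pi : ℂ) ≠ 0 := by exact_mod_cast Real.pi_ne_zero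
  simp [Complex.I_ne_zero, hq0, hπ]

include hp hq hq4 hpq in
lemma AA_formula : ∀ n : ℕ, ((n : ℂ) + 1) * AA p q n = -2 * cc q ^ n * SS p q (n + 1) := by
  intro n
  induction n using Nat.strong_induction_on with
  | _ n IH =>
  have hc0 := cc_ne_zero q hq4
  have hrec := recursion p q hp hq hq4 hpq n
  set x₀c : ℂ := (((p : ℝ) / q : ℝ) : ℂ) with hx₀c
  set Y : ℂ := ∑ α ∈ Icc 1 q, coef α * Complex.exp (aa α * x₀c) * ((yy q α : ℚ) : ℂ) ^ (n + 1)
    with hY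
  have hD : (∑ α ∈ Icc 1 q, coef α * aa α ^ (n + 1) * Complex.exp (aa α * x₀c)) =
      cc q ^ (n + 1) * Y := by
    rw [hY, Finset.mul_sum]
    refine Finset.sum_congr rfl fun α hα => ?_
    have hα1 : 1 ≤ α := (Finset.mem_Icc.1 hα).1
    rw [aa_eq_cc_mul_y q hq4 α hα1, mul_pow]
    ring
  have hSsum : ∑ j ∈ range (n + 2), (((n + 2).choose j : ℕ) : ℂ) * SS p q j =
      ((n : ℂ) + 2) * Y := by
    have h1 : ∀ j ∈ range (n + 2), (((n + 2).choose j : ℕ) : ℂ) * SS p q j =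
        ∑ α ∈ Icc 1 q, coef α * Complex.exp (aa α * x₀c) *
          ((((n + 2).choose j : ℕ) : ℂ) *
            ((Polynomial.eval (yy q α) (Polynomial.bernoulli j) : ℚ) : ℂ)) := by
      intro j _
      rw [SS, Finset.mul_sum]
      exact Finset.sum_congr rfl fun α _ => by ring
    rw [Finset.sum_congr rfl h1, Finset.sum_comm, hY, Finset.mul_sum]
    refine Finset.sum_congr rfl fun α _ => ?_
    rw [← Finset.mul_sum, bern_sum n (yy q α)]
    ring
  have hpeel : ∑ j ∈ range (n + 2), (((n + 2).choose j : ℕ) : ℂ) * SS p q j =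
      ∑ k ∈ range (n + 1), (((n + 2).choose (k + 1) : ℕ) : ℂ) * SS p q (k + 1) := by
    rw [Finset.sum_range_succ' (fun j => (((n + 2).choose j : ℕ) : ℂ) * SS p q j) (n + 1)]
    rw [SS_zero p q hp hq hq4 hpq]
    simp
  have hkey : ∑ k ∈ range (n + 1), (((n + 2).choose (k + 1) : ℕ) : ℂ) * SS p q (k + 1) =
      ((n : ℂ) + 2) * Y := by rw [← hpeel, hSsum]
  have hn2 : ((n : ℂ) + 2) ≠ 0 := by
    have h0 : ((n + 2 : ℕ) : ℂ) ≠ 0 := Nat.cast_ne_zero.2 (by omega)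
    push_cast at h0
    exact h0
  have hTail : ∑ k ∈ range n, (((n + 2).choose (k + 1) : ℕ) : ℂ) * SS p q (k + 1) =
      ((n : ℂ) + 2) * Y - ((n : ℂ) + 2) * SS p q (n + 1) := by
    have h5 := Finset.sum_range_succ
      (fun k => (((n + 2).choose (k + 1) : ℕ) : ℂ) * SS p q (k + 1)) n
    rw [hkey] at h5
    have hch : (n + 2).choose (n + 1) = n + 2 := Nat.choose_succ_self_right (n + 1)
    rw [hch] at h5
    push_cast at h5
    linear_combination -h5
  -- rewrite the tail of the recursion using IH
  have hT : ∀ k ∈ range n, ((n + 1).choose k : ℂ) * AA p q k * (-(cc q ^ (n + 1 - k)) / 2) =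
      cc q ^ (n + 1) * ((((n + 2).choose (k + 1) : ℕ) : ℂ) * SS p q (k + 1)) / ((n : ℂ) + 2) := by
    intro k hk
    have hk' := Finset.mem_range.1 hk
    have hIH := IH k hk'
    have hk1 : ((k : ℂ) + 1) ≠ 0 := by
      have h0 : ((k + 1 : ℕ) : ℂ) ≠ 0 := Nat.cast_ne_zero.2 (by omega)
      push_cast at h0
      exact h0
    have hA : AA p q k = (-2 * cc q ^ k * SS p q (k + 1)) / ((k : ℂ) + 1) := by
      rw [eq_div_iff hk1, mul_comm]
      exact hIH
    have hpow : cc q ^ k * cc q ^ (n + 1 - k) = cc q ^ (n + 1) := by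
      rw [← pow_add]
      congr 1
      omega
    have hchoose : ((n : ℂ) + 2) * ((n + 1).choose k : ℂ) =
        (((n + 2).choose (k + 1) : ℕ) : ℂ) * ((k : ℂ) + 1) := by
      have h2 : (n + 2) * (n + 1).choose k = (n + 2).choose (k + 1) * (k + 1) := by
        simpa [Nat.succ_eq_add_one] using Nat.add_one_mul_choose_eq (n + 1) k
      exact_mod_cast h2
    rw [hA, eq_div_iff hn2]
    field_simp
    linear_combination (SS p q (k + 1) * cc q ^ k * cc q ^ (n + 1 - k)) * hchoose +
      (SS p q (k + 1) * (((n + 2).choose (k + 1) : ℕ) : ℂ) * ((k : ℂ) + 1)) * hpow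
  -- peel the k = n term of the recursion
  rw [Finset.sum_range_succ] at hrec
  rw [Finset.sum_congr rfl hT] at hrec
  rw [← Finset.sum_div, ← Finset.mul_sum, hTail] at hrec
  rw [hD] at hrec
  have hch2 : ((n + 1).choose n : ℂ) = (n : ℂ) + 1 := by
    rw [Nat.choose_succ_self_right]
    push_cast
    ring
  have hsub : n + 1 - n = 1 := by omega
  rw [hch2, hsub, pow_one] at hrec
  have hsimp : cc q ^ (n + 1) * (((n : ℂ) + 2) * Y - ((n : ℂ) + 2) * SS p q (n + 1)) / ((n : ℂ) + 2) =
      cc q ^ (n + 1) * (Y - SS p q (n + 1)) := by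
    field_simp
  rw [hsimp] at hrec
  have heq : ((n : ℂ) + 1) * AA p q n * (-(cc q) / 2) = cc q ^ (n + 1) * SS p q (n + 1) := by
    linear_combination hrec
  have hfac : (-(cc q) / 2) ≠ 0 := by
    simp [hc0]
  apply mul_right_cancel₀ hfac
  rw [heq, pow_succ]
  ring

end hyps


end SecAux

/-- **Theorem 2(ii), even case** (Cvijović): closed form for the derivatives of the secant
function at rational multiples of π with even denominator, in terms of Bernoulli polynomials. -/
theorem iteratedDeriv_sec_ratPi_even (n p q : ℕ) (hn : 0 < n) (hp : 1 ≤ p)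
    (hq : Even q) (hq4 : 4 ≤ q) (hpq : 2 * p < q) :
    ((iteratedDeriv n (fun x : ℝ => 1 / Real.cos (Real.pi * x)) ((p : ℝ) / q) : ℝ) : ℂ) =
      -(Complex.I ^ n) * (2 * Real.pi * q) ^ n * (2 / (n + 1)) *
        ∑ α ∈ Finset.Icc 1 q,
          (-1 : ℂ) ^ (α - 1) * Complex.exp (Real.pi * Complex.I * (2 * α - 1) * p / q) *
            ((Polynomial.eval (((2 * α - 1 : ℕ) : ℚ) / (2 * q)) (Polynomial.bernoulli (n + 1)) : ℚ) : ℂ) := by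
  have hq0 : (q : ℂ) ≠ 0 := by exact_mod_cast (by omega : q ≠ 0)
  have hform := SecAux.AA_formula p q hp hq hq4 hpq n
  have hn1 : ((n : ℂ) + 1) ≠ 0 := by
    have h0 : ((n + 1 : ℕ) : ℂ) ≠ 0 := Nat.cast_ne_zero.2 (by omega)
    push_cast at h0
    exact h0
  have hA : SecAux.AA p q n = (-2 * SecAux.cc q ^ n * SecAux.SS p q (n + 1)) / ((n : ℂ) + 1) := by
    rw [eq_div_iff hn1]
    linear_combination hform
  have hSrw : SecAux.SS p q (n + 1) = ∑ α ∈ Finset.Icc 1 q,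
      (-1 : ℂ) ^ (α - 1) * Complex.exp (Real.pi * Complex.I * (2 * α - 1) * p / q) *
        ((Polynomial.eval (((2 * α - 1 : ℕ) : ℚ) / (2 * q)) (Polynomial.bernoulli (n + 1)) : ℚ) : ℂ) := by
    rw [SecAux.SS]
    refine Finset.sum_congr rfl fun α hα => ?_
    congr 1
    · congr 1
      congr 1
      rw [SecAux.aa]
      push_cast
      ring
  have hgoal : ((iteratedDeriv n (fun x : ℝ => 1 / Real.cos (Real.pi * x)) ((p : ℝ) / q) : ℝ) : ℂ) =
      SecAux.AA p q n := rfl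
  rw [hgoal, hA, ← hSrw]
  rw [SecAux.cc, show ((2 : ℂ) * (Real.pi : ℂ) * (q : ℂ) * Complex.I) ^ n =
    ((2 : ℂ) * (Real.pi : ℂ) * (q : ℂ)) ^ n * Complex.I ^ n from by rw [mul_pow]]
  rw [div_eq_iff hn1]
  have h2 : (2 : ℂ) / ((n : ℂ) + 1) * ((n : ℂ) + 1) = 2 := div_mul_cancel₀ 2 hn1
  linear_combination (Complex.I ^ n * (2 * (Real.pi : ℂ) * (q : ℂ)) ^ n *
    SecAux.SS p q (n + 1)) * h2
end

section
/- For every positive integer n, the (2n)-th derivative of the function x ↦ csc(πx) evaluated at x = 1/2 equals (−1)^{n−1} · (4(4π)^{2n}/(2n+1)) · B_{2n+1}(1/4), where B_{2n+1} is the (2n+1)-st Bernoulli polynomial. -/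
open Real Polynomial Finset Topology

namespace AuxCsc

lemma bernoulli_comp_add (N : ℕ) (y : ℚ) :
    (Polynomial.bernoulli N).comp (X + C y) =
      ∑ k ∈ range (N + 1), C ((N.choose k : ℚ) * y ^ (N - k)) * Polynomial.bernoulli k := by
  induction N with
  | zero => simp
  | succ N ih =>
    have hdP : derivative ((Polynomial.bernoulli (N + 1)).comp (X + C y)) =
        C ((N : ℚ) + 1) * ((Polynomial.bernoulli N).comp (X + C y)) := by
      rw [derivative_comp, Polynomial.derivative_bernoulli_add_one]
      rw [mul_comp]
      rw [derivative_add, derivative_X, derivative_C, add_zero, one_mul]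
      congr 1
      rw [← C_eq_natCast, ← C_1, ← C_add, C_comp]
    have hdQ : derivative (∑ k ∈ range (N + 2),
        C (((N + 1).choose k : ℚ) * y ^ (N + 1 - k)) * Polynomial.bernoulli k) =
        C ((N : ℚ) + 1) *
          ∑ k ∈ range (N + 1), C ((N.choose k : ℚ) * y ^ (N - k)) * Polynomial.bernoulli k := by
      rw [derivative_sum]
      rw [Finset.sum_range_succ' (fun k => derivative
        (C (((N + 1).choose k : ℚ) * y ^ (N + 1 - k)) * Polynomial.bernoulli k))]
      rw [Finset.mul_sum]
      have h0 : derivative (C (((N + 1).choose 0 : ℚ) * y ^ (N + 1 - 0)) *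
          Polynomial.bernoulli 0) = 0 := by
        simp only [Polynomial.bernoulli_zero, mul_one, derivative_C]
      rw [h0, add_zero]
      refine Finset.sum_congr rfl fun i hi => ?_
      rw [derivative_mul, derivative_C, zero_mul, zero_add,
        Polynomial.derivative_bernoulli (i + 1)]
      have hsub : N + 1 - (i + 1) = N - i := by omega
      rw [Nat.add_sub_cancel]
      rw [show ((i + 1 : ℕ) : ℚ[X]) = C ((i + 1 : ℕ) : ℚ) from (C_eq_natCast _).symm, hsub]
      rw [← mul_assoc, ← C_mul, ← mul_assoc, ← C_mul]
      have h2 := congrArg (fun m : ℕ => (m : ℚ)) (Nat.add_one_mul_choose_eq N i)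
      push_cast at h2
      congr 1
      rw [C_inj]
      push_cast
      linear_combination (-(y ^ (N - i))) * h2
    have hzero : derivative ((Polynomial.bernoulli (N + 1)).comp (X + C y) -
        ∑ k ∈ range (N + 2), C (((N + 1).choose k : ℚ) * y ^ (N + 1 - k)) *
          Polynomial.bernoulli k) = 0 := by
      rw [derivative_sub, hdP, hdQ, ih, sub_self]
    have hC := Polynomial.eq_C_of_derivative_eq_zero hzero
    have heval : ((Polynomial.bernoulli (N + 1)).comp (X + C y) -
        ∑ k ∈ range (N + 2), C (((N + 1).choose k : ℚ) * y ^ (N + 1 - k)) *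
          Polynomial.bernoulli k).eval 0 = 0 := by
      rw [eval_sub, eval_comp]
      simp only [eval_add, eval_X, eval_C, zero_add, eval_finset_sum, eval_mul]
      rw [sub_eq_zero]
      conv_lhs => rw [Polynomial.bernoulli]
      rw [eval_finset_sum]
      refine Finset.sum_congr rfl fun i hi => ?_
      simp [eval_monomial]
      ring
    rw [Polynomial.coeff_zero_eq_eval_zero, heval, map_zero] at hC
    exact sub_eq_zero.mp hC


lemma bernoulli_eval_add (N : ℕ) (x y : ℚ) :
    (Polynomial.bernoulli N).eval (x + y) =
      ∑ k ∈ range (N + 1), (N.choose k : ℚ) * (Polynomial.bernoulli k).eval x * y ^ (N - k) := by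
  have h := congrArg (eval x) (bernoulli_comp_add N y)
  rw [eval_comp, eval_add, eval_X, eval_C, eval_finset_sum] at h
  rw [h]
  refine Finset.sum_congr rfl fun k hk => ?_
  rw [eval_mul, eval_C]
  ring

lemma bernoulli_comp_one_sub (N : ℕ) :
    (Polynomial.bernoulli N).comp (1 - X) = C ((-1 : ℚ) ^ N) * Polynomial.bernoulli N := by
  induction N with
  | zero => simp
  | succ N ih =>
    have hd : derivative ((Polynomial.bernoulli (N + 1)).comp (1 - X) -
        C ((-1 : ℚ) ^ (N + 1)) * Polynomial.bernoulli (N + 1)) = 0 := by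
      rw [derivative_sub, derivative_comp_one_sub_X, Polynomial.derivative_bernoulli_add_one,
        derivative_mul, derivative_C, zero_mul, zero_add,
        Polynomial.derivative_bernoulli_add_one, mul_comp, ih]
      rw [show ((N : ℚ[X]) + 1) = C ((N : ℚ) + 1) by rw [← C_eq_natCast, ← C_1, ← C_add]]
      rw [C_comp]
      simp only [pow_succ, C_mul, map_neg, map_one]
      ring
    have hC := Polynomial.eq_C_of_derivative_eq_zero hd
    have heval : ((Polynomial.bernoulli (N + 1)).comp (1 - X) -
        C ((-1 : ℚ) ^ (N + 1)) * Polynomial.bernoulli (N + 1)).eval 0 = 0 := by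
      rw [eval_sub, eval_comp, eval_mul, eval_C]
      simp only [eval_sub, eval_one, eval_X, sub_zero]
      rw [Polynomial.bernoulli_eval_one, Polynomial.bernoulli_eval_zero,
        _root_.bernoulli'_eq_bernoulli]
      ring
    rw [Polynomial.coeff_zero_eq_eval_zero, heval, map_zero] at hC
    exact sub_eq_zero.mp hC

lemma bernoulli_odd_eval_half {N : ℕ} (h : Odd N) :
    (Polynomial.bernoulli N).eval (1 / 2 : ℚ) = 0 := by
  have hc := congrArg (eval (1 / 2 : ℚ)) (bernoulli_comp_one_sub N)
  rw [eval_comp, eval_mul, eval_C, h.neg_one_pow] at hc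
  simp only [eval_sub, eval_one, eval_X] at hc
  norm_num at hc
  linarith

lemma sum_pair (f : ℕ → ℚ) (M : ℕ) :
    ∑ k ∈ range (2 * M), f k = ∑ j ∈ range M, (f (2 * j) + f (2 * j + 1)) := by
  induction M with
  | zero => simp
  | succ M ih =>
    rw [show 2 * (M + 1) = 2 * M + 1 + 1 by ring, Finset.sum_range_succ, Finset.sum_range_succ,
      Finset.sum_range_succ, ih]
    ring

lemma key_S (m : ℕ) (hm : 1 ≤ m) :
    ∑ j ∈ range (m + 1), ((2 * m + 1).choose (2 * j + 1) : ℚ) * 4 ^ (2 * j + 1) *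
      (Polynomial.bernoulli (2 * j + 1)).eval (1 / 4 : ℚ) = 0 := by
  set N := 2 * m + 1 with hN
  have hoddN : Odd N := ⟨m, by omega⟩
  have hS4 : ∑ k ∈ range (N + 1), (N.choose k : ℚ) *
      (Polynomial.bernoulli k).eval (1 / 4 : ℚ) * (4 : ℚ) ^ k = 0 := by
    have h := bernoulli_eval_add N (1 / 4) (1 / 4)
    norm_num at h
    have h2 : (4 : ℚ) ^ N * (Polynomial.bernoulli N).eval (1 / 2 : ℚ) =
        ∑ k ∈ range (N + 1), (N.choose k : ℚ) *
          (Polynomial.bernoulli k).eval (1 / 4 : ℚ) * (4 : ℚ) ^ k := by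
      rw [h, Finset.mul_sum]
      refine Finset.sum_congr rfl fun k hk => ?_
      have hk' : k ≤ N := by simpa using Nat.lt_succ_iff.mp (Finset.mem_range.mp hk)
      have h4 : (4 : ℚ) ^ N * (1 / 4 : ℚ) ^ (N - k) = 4 ^ k := by
        rw [one_div, inv_pow, ← pow_sub₀ (4 : ℚ) (by norm_num) (Nat.sub_le N k)]
        congr 1; omega
      calc (4 : ℚ) ^ N * ((N.choose k : ℚ) * (Polynomial.bernoulli k).eval (1 / 4 : ℚ) *
              (1 / 4 : ℚ) ^ (N - k))
          = ((N.choose k : ℚ) * (Polynomial.bernoulli k).eval (1 / 4 : ℚ)) *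
              ((4 : ℚ) ^ N * (1 / 4 : ℚ) ^ (N - k)) := by ring
        _ = _ := by rw [h4]
    rw [← h2, bernoulli_odd_eval_half hoddN, mul_zero]
  have hSm4 : ∑ k ∈ range (N + 1), (N.choose k : ℚ) *
      (Polynomial.bernoulli k).eval (1 / 4 : ℚ) * (-4 : ℚ) ^ k = 0 := by
    have h := bernoulli_eval_add N (1 / 4) (-(1 / 4))
    norm_num at h
    have h2 : (-4 : ℚ) ^ N * _root_.bernoulli N =
        ∑ k ∈ range (N + 1), (N.choose k : ℚ) *
          (Polynomial.bernoulli k).eval (1 / 4 : ℚ) * (-4 : ℚ) ^ k := by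
      rw [h, Finset.mul_sum]
      refine Finset.sum_congr rfl fun k hk => ?_
      have hk' : k ≤ N := Nat.lt_succ_iff.mp (Finset.mem_range.mp hk)
      have h4 : (-4 : ℚ) ^ N * (-4 : ℚ)⁻¹ ^ (N - k) = (-4) ^ k := by
        rw [inv_pow, ← pow_sub₀ (-4 : ℚ) (by norm_num) (Nat.sub_le N k)]
        congr 1; omega
      have hneg : (-(1 / 4) : ℚ) ^ (N - k) = (-4 : ℚ)⁻¹ ^ (N - k) := by norm_num
      calc (-4 : ℚ) ^ N * ((N.choose k : ℚ) * (Polynomial.bernoulli k).eval (1 / 4 : ℚ) *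
              (-(1 / 4) : ℚ) ^ (N - k))
          = ((N.choose k : ℚ) * (Polynomial.bernoulli k).eval (1 / 4 : ℚ)) *
              ((-4 : ℚ) ^ N * (-(1 / 4) : ℚ) ^ (N - k)) := by ring
        _ = _ := by rw [hneg, h4]
    have hb : _root_.bernoulli N = 0 := by
      rw [_root_.bernoulli_eq_bernoulli'_of_ne_one (by omega),
        _root_.bernoulli'_eq_zero_of_odd hoddN (by omega)]
    rw [← h2, hb, mul_zero]
  have hD : ∑ k ∈ range (N + 1), (N.choose k : ℚ) *
      (Polynomial.bernoulli k).eval (1 / 4 : ℚ) * ((4 : ℚ) ^ k - (-4 : ℚ) ^ k) = 0 := by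
    have := Finset.sum_sub_distrib (s := range (N + 1))
      (f := fun k => (N.choose k : ℚ) * (Polynomial.bernoulli k).eval (1 / 4 : ℚ) * (4 : ℚ) ^ k)
      (g := fun k => (N.choose k : ℚ) * (Polynomial.bernoulli k).eval (1 / 4 : ℚ) * (-4 : ℚ) ^ k)
    simp only [← mul_sub] at this
    rw [this, hS4, hSm4, sub_zero]
  have hpair := sum_pair (fun k => (N.choose k : ℚ) *
      (Polynomial.bernoulli k).eval (1 / 4 : ℚ) * ((4 : ℚ) ^ k - (-4 : ℚ) ^ k)) (m + 1)
  rw [show 2 * (m + 1) = N + 1 by omega] at hpair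
  rw [hD] at hpair
  have hsimp : ∀ j, (N.choose (2 * j) : ℚ) * (Polynomial.bernoulli (2 * j)).eval (1 / 4 : ℚ) *
        ((4 : ℚ) ^ (2 * j) - (-4 : ℚ) ^ (2 * j)) +
      (N.choose (2 * j + 1) : ℚ) * (Polynomial.bernoulli (2 * j + 1)).eval (1 / 4 : ℚ) *
        ((4 : ℚ) ^ (2 * j + 1) - (-4 : ℚ) ^ (2 * j + 1)) =
      2 * ((N.choose (2 * j + 1) : ℚ) * 4 ^ (2 * j + 1) *
        (Polynomial.bernoulli (2 * j + 1)).eval (1 / 4 : ℚ)) := by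
    intro j
    have he : (-4 : ℚ) ^ (2 * j) = (4 : ℚ) ^ (2 * j) := (Even.neg_pow ⟨j, by ring⟩ _)
    have ho : (-4 : ℚ) ^ (2 * j + 1) = -(4 : ℚ) ^ (2 * j + 1) := (Odd.neg_pow ⟨j, by ring⟩ _)
    rw [he, ho]
    ring
  rw [Finset.sum_congr rfl (fun j _ => hsimp j), ← Finset.mul_sum] at hpair
  have := (mul_eq_zero.mp hpair.symm).resolve_left (by norm_num)
  linarith [this]

noncomputable def βq (k : ℕ) : ℚ :=
  if Even k then
    (-1) ^ (k / 2 + 1) * 4 ^ (k + 1) * (Polynomial.bernoulli (k + 1)).eval (1 / 4 : ℚ) / (k + 1)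
  else 0

def dq (j : ℕ) : ℚ := if Even j then (-1) ^ (j / 2) else 0

lemma βq_odd {k : ℕ} (h : ¬ Even k) : βq k = 0 := if_neg h

lemma βq_zero : βq 0 = 1 := by
  rw [βq, if_pos Even.zero]
  norm_num [Polynomial.bernoulli, Finset.sum_range_succ, eval_monomial]

lemma key_sum (n : ℕ) (hn : 1 ≤ n) :
    ∑ k ∈ range (n + 1), (n.choose k : ℚ) * βq k * dq (n - k) = 0 := by
  rcases Nat.even_or_odd n with he | ho
  · -- n even, n = 2m with m ≥ 1
    obtain ⟨m, hm⟩ := he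
    have hm1 : 1 ≤ m := by omega
    have hstep : ∑ k ∈ range (n + 1 + 1), (n.choose k : ℚ) * βq k * dq (n - k) =
        ∑ k ∈ range (n + 1), (n.choose k : ℚ) * βq k * dq (n - k) := by
      rw [Finset.sum_range_succ, βq_odd (by simp [hm, parity_simps] : ¬ Even (n + 1)),
        mul_zero, zero_mul, add_zero]
    rw [← hstep]
    have hpair := sum_pair (fun k => (n.choose k : ℚ) * βq k * dq (n - k)) (m + 1)
    rw [show 2 * (m + 1) = n + 1 + 1 by omega] at hpair
    rw [hpair]
    have hterm : ∀ j ∈ range (m + 1),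
        ((n.choose (2 * j) : ℚ) * βq (2 * j) * dq (n - 2 * j) +
          (n.choose (2 * j + 1) : ℚ) * βq (2 * j + 1) * dq (n - (2 * j + 1))) =
        ((-1 : ℚ) ^ (m + 1) / (2 * m + 1)) * (((2 * m + 1).choose (2 * j + 1) : ℚ) *
          4 ^ (2 * j + 1) * (Polynomial.bernoulli (2 * j + 1)).eval (1 / 4 : ℚ)) := by
      intro j hj
      have hjm : j ≤ m := Nat.lt_succ_iff.mp (Finset.mem_range.mp hj)
      rw [βq_odd (by simp [parity_simps] : ¬ Even (2 * j + 1)), mul_zero, zero_mul, add_zero]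
      rw [βq, if_pos ⟨j, by ring⟩]
      rw [show n - 2 * j = 2 * (m - j) by omega]
      rw [dq, if_pos ⟨m - j, by ring⟩]
      rw [show 2 * j / 2 = j by omega, show 2 * (m - j) / 2 = m - j by omega]
      have hsign : ((-1 : ℚ)) ^ (j + 1) * (-1 : ℚ) ^ (m - j) = (-1 : ℚ) ^ (m + 1) := by
        rw [← pow_add]
        have : (j + 1 + (m - j)) = (m + 1) := by omega
        rw [this]
      have hc : ((2 * m + 1 : ℕ) : ℚ) * ((2 * m).choose (2 * j) : ℚ) =
          (((2 * m + 1).choose (2 * j + 1) : ℕ) : ℚ) * ((2 * j + 1 : ℕ) : ℚ) := by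
        exact_mod_cast congrArg (fun t : ℕ => (t : ℚ)) (Nat.add_one_mul_choose_eq (2 * m) (2 * j))
      have hn2m : (n.choose (2 * j) : ℚ) = ((2 * m).choose (2 * j) : ℚ) := by
        rw [show n = 2 * m by omega]
      rw [hn2m]
      push_cast at hc ⊢
      have h2j : ((2 * j : ℚ) + 1) ≠ 0 := by positivity
      have h2m : ((2 * m : ℚ) + 1) ≠ 0 := by positivity
      have hsign' : ((-1 : ℚ)) ^ j * (-1 : ℚ) ^ (m - j) = (-1 : ℚ) ^ m := by
        rw [← pow_add]
        congr 1
        omega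
      field_simp
      linear_combination ((-1 : ℚ)) ^ (j + 1) * (-1 : ℚ) ^ (m - j) *
          (Polynomial.bernoulli (2 * j + 1)).eval (1 / 4 : ℚ) * hc +
        (Polynomial.bernoulli (2 * j + 1)).eval (1 / 4 : ℚ) *
          ((2 * m + 1).choose (2 * j + 1) : ℚ) * (2 * (j : ℚ) + 1) * hsign
    rw [Finset.sum_congr rfl hterm, ← Finset.mul_sum, key_S m hm1, mul_zero]
  · -- n odd
    refine Finset.sum_eq_zero fun k hk => ?_
    by_cases hek : Even k
    · have : ¬ Even (n - k) := by
        have hk' : k ≤ n := Nat.lt_succ_iff.mp (Finset.mem_range.mp hk)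
        have hek2 := Nat.even_iff.mp hek
        have ho2 := Nat.odd_iff.mp ho
        rw [Nat.even_sub hk']
        simp only [Nat.even_iff]
        omega
      rw [dq, if_neg this, mul_zero]
    · rw [βq_odd hek, mul_zero, zero_mul]


/-! ### Analysis -/

noncomputable def gsec : ℝ → ℝ := fun t => (Real.cos (Real.pi * t))⁻¹

def S : Set ℝ := {t : ℝ | Real.cos (Real.pi * t) ≠ 0}

lemma cosπ_smooth : ContDiff ℝ (⊤ : ℕ∞) (fun t : ℝ => Real.cos (Real.pi * t)) :=
  Real.contDiff_cos.comp (contDiff_const.mul contDiff_id)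

lemma isOpen_S : IsOpen S :=
  isOpen_compl_singleton.preimage cosπ_smooth.continuous

lemma zero_mem_S : (0 : ℝ) ∈ S := by simp [S]

lemma contDiffOn_gsec : ContDiffOn ℝ (⊤ : ℕ∞) gsec S :=
  (cosπ_smooth.contDiffOn).inv fun x hx => hx

lemma iteratedDerivWithin_of_isOpen' {s : Set ℝ} (hs : IsOpen s) {f : ℝ → ℝ} (k : ℕ)
    {y : ℝ} (hy : y ∈ s) : iteratedDerivWithin k f s y = iteratedDeriv k f y := by
  rw [iteratedDerivWithin, iteratedDeriv, iteratedFDerivWithin_of_isOpen k hs hy]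

lemma diffAt_iter {s : Set ℝ} (hs : IsOpen s) {f : ℝ → ℝ} (hf : ContDiffOn ℝ (⊤ : ℕ∞) f s)
    (k : ℕ) {x : ℝ} (hx : x ∈ s) : DifferentiableAt ℝ (iteratedDeriv k f) x := by
  have h1 : DifferentiableWithinAt ℝ (iteratedDerivWithin k f s) s x :=
    (hf.differentiableOn_iteratedDerivWithin (by exact_mod_cast ENat.coe_lt_top k)
      hs.uniqueDiffOn) x hx
  have h2 : DifferentiableAt ℝ (iteratedDerivWithin k f s) x :=
    h1.differentiableAt (hs.mem_nhds hx)
  apply h2.congr_of_eventuallyEq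
  filter_upwards [hs.mem_nhds hx] with y hy
  exact (iteratedDerivWithin_of_isOpen' hs k hy).symm

lemma choose_step (a b : ℕ → ℝ) (n : ℕ) :
    ∑ k ∈ Finset.range (n + 1), ((n.choose k : ℝ) * a (k + 1) * b (n - k) +
        (n.choose k : ℝ) * a k * b (n + 1 - k)) =
      ∑ k ∈ Finset.range (n + 2), (((n + 1).choose k : ℝ) * a k * b (n + 1 - k)) := by
  rw [Finset.sum_add_distrib]
  have h1 : ∀ k ∈ Finset.range (n + 1), (n.choose k : ℝ) * a (k + 1) * b (n - k) =
      (n.choose k : ℝ) * a (k + 1) * b (n + 1 - (k + 1)) := fun k _ => by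
    rw [show n + 1 - (k + 1) = n - k from by omega]
  rw [Finset.sum_congr rfl h1]
  rw [Finset.sum_range_succ' (fun k => (n.choose k : ℝ) * a k * b (n + 1 - k))]
  rw [Finset.sum_range_succ' (fun k => ((n + 1).choose k : ℝ) * a k * b (n + 1 - k))]
  rw [show (∑ i ∈ Finset.range n, (n.choose (i + 1) : ℝ) * a (i + 1) * b (n + 1 - (i + 1))) =
      ∑ i ∈ Finset.range (n + 1), (n.choose (i + 1) : ℝ) * a (i + 1) * b (n + 1 - (i + 1)) from by
    rw [Finset.sum_range_succ, Nat.choose_succ_self]; push_cast; ring]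
  rw [← add_assoc, ← Finset.sum_add_distrib]
  congr 1
  · refine Finset.sum_congr rfl fun k _ => ?_
    rw [Nat.choose_succ_succ]
    push_cast
    ring
  · norm_num

lemma leibniz_on {s : Set ℝ} (hs : IsOpen s) {f h : ℝ → ℝ} (hf : ContDiffOn ℝ (⊤ : ℕ∞) f s)
    (hh : ContDiff ℝ (⊤ : ℕ∞) h) :
    ∀ n : ℕ, ∀ x ∈ s, iteratedDeriv n (fun t => f t * h t) x =
      ∑ k ∈ Finset.range (n + 1),
        (n.choose k : ℝ) * iteratedDeriv k f x * iteratedDeriv (n - k) h x := by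
  intro n
  induction n with
  | zero => intro x hx; simp
  | succ n ih =>
    intro x hx
    rw [iteratedDeriv_succ]
    have hev : iteratedDeriv n (fun t => f t * h t) =ᶠ[𝓝 x] fun y =>
        ∑ k ∈ Finset.range (n + 1),
          (n.choose k : ℝ) * iteratedDeriv k f y * iteratedDeriv (n - k) h y := by
      filter_upwards [hs.mem_nhds hx] with y hy using ih y hy
    rw [hev.deriv_eq]
    have hdiff : ∀ k ∈ Finset.range (n + 1), DifferentiableAt ℝ
        (fun y => (n.choose k : ℝ) * iteratedDeriv k f y * iteratedDeriv (n - k) h y) x := by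
      intro k _
      exact (((diffAt_iter hs hf k hx).const_mul _).mul
        ((hh.differentiable_iteratedDeriv _
          (ENat.natCast_lt_of_coe_top_le_withTop le_rfl _)).differentiableAt))
    rw [deriv_fun_sum hdiff]
    have hterm : ∀ k ∈ Finset.range (n + 1), deriv
        (fun y => (n.choose k : ℝ) * iteratedDeriv k f y * iteratedDeriv (n - k) h y) x =
        (n.choose k : ℝ) * iteratedDeriv (k + 1) f x * iteratedDeriv (n - k) h x +
          (n.choose k : ℝ) * iteratedDeriv k f x * iteratedDeriv (n + 1 - k) h x := by
      intro k hk
      have h1 : DifferentiableAt ℝ (fun y => (n.choose k : ℝ) * iteratedDeriv k f y) x :=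
        (diffAt_iter hs hf k hx).const_mul _
      have h2 : DifferentiableAt ℝ (iteratedDeriv (n - k) h) x :=
        (hh.differentiable_iteratedDeriv _
          (ENat.natCast_lt_of_coe_top_le_withTop le_rfl _)).differentiableAt
      rw [show (fun y => (n.choose k : ℝ) * iteratedDeriv k f y * iteratedDeriv (n - k) h y) =
        (fun y => ((n.choose k : ℝ) * iteratedDeriv k f y) * iteratedDeriv (n - k) h y) from rfl]
      rw [deriv_fun_mul h1 h2, deriv_const_mul _ (diffAt_iter hs hf k hx),
        ← iteratedDeriv_succ, ← iteratedDeriv_succ,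
        show n - k + 1 = n + 1 - k from by
          have := Finset.mem_range.mp hk; omega, mul_assoc, mul_assoc]
    rw [Finset.sum_congr rfl hterm, choose_step (fun k => iteratedDeriv k f x)
      (fun j => iteratedDeriv j h x) n]

end AuxCsc

namespace AuxCsc
open Finset Real Topology

lemma iter_cos (j : ℕ) :
    iteratedDeriv j Real.cos = fun x : ℝ => Real.cos (x + j * (Real.pi / 2)) := by
  induction j with
  | zero => simp
  | succ j ih =>
    rw [iteratedDeriv_succ, ih]
    funext x
    have hd : HasDerivAt (fun x : ℝ => Real.cos (x + j * (Real.pi / 2)))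
        (-Real.sin (x + j * (Real.pi / 2))) x := by
      have h1 : HasDerivAt (fun x : ℝ => x + (j : ℝ) * (Real.pi / 2)) 1 x := by
        simpa using (hasDerivAt_id x).add_const ((j : ℝ) * (Real.pi / 2))
      simpa [Function.comp_def] using (Real.hasDerivAt_cos (x + j * (Real.pi / 2))).comp x h1
    rw [hd.deriv]
    rw [← Real.cos_add_pi_div_two]
    congr 1
    push_cast
    ring

lemma iter_cosπ (j : ℕ) : iteratedDeriv j (fun t : ℝ => Real.cos (Real.pi * t)) 0 =
    Real.pi ^ j * Real.cos ((j : ℝ) * (Real.pi / 2)) := by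
  have h1 := iteratedDeriv_comp_const_mul (n := j) (f := Real.cos)
    (Real.contDiff_cos (n := (j : ℕ∞))) Real.pi
  have h2 := congrFun h1 0
  simp only [mul_zero] at h2
  rw [h2, iter_cos]
  simp

lemma cos_half_pi_mul (j : ℕ) :
    Real.cos ((j : ℝ) * (Real.pi / 2)) = ((dq j : ℚ) : ℝ) := by
  rcases Nat.even_or_odd j with he | ho
  · obtain ⟨i, hi⟩ := he
    have hj : (j : ℝ) = 2 * i := by rw [hi]; push_cast; ring
    rw [hj, dq, if_pos ⟨i, hi⟩]
    rw [show (2 : ℝ) * i * (Real.pi / 2) = i * Real.pi - 0 by ring]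
    rw [Real.cos_nat_mul_pi_sub, Real.cos_zero, mul_one]
    rw [show j / 2 = i by omega]
    push_cast
    simp
  · obtain ⟨i, hi⟩ := ho
    have hj : (j : ℝ) = 2 * i + 1 := by rw [hi]; push_cast; ring
    rw [hj, dq, if_neg (by rw [hi]; simp [parity_simps])]
    rw [show ((2 : ℝ) * i + 1) * (Real.pi / 2) = i * Real.pi + Real.pi / 2 by ring]
    rw [Real.cos_add_pi_div_two, Real.sin_nat_mul_pi, neg_zero]
    simp

noncomputable def ar (k : ℕ) : ℝ := iteratedDeriv k gsec 0

lemma iter_one_eq_zero (n : ℕ) (hn : 1 ≤ n) :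
    iteratedDeriv n (fun _ : ℝ => (1 : ℝ)) = fun _ => 0 := by
  induction n with
  | zero => omega
  | succ n ih =>
    rcases Nat.eq_or_lt_of_le hn with h | h
    · rw [iteratedDeriv_succ]
      rw [show n = 0 by omega, iteratedDeriv_zero]
      funext x
      exact deriv_const x 1
    · rw [iteratedDeriv_succ, ih (by omega)]
      funext x
      exact deriv_const x 0

lemma recurrence (n : ℕ) (hn : 1 ≤ n) :
    ∑ k ∈ Finset.range (n + 1), (n.choose k : ℝ) * ar k *
      (Real.pi ^ (n - k) * ((dq (n - k) : ℚ) : ℝ)) = 0 := by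
  have hL := leibniz_on isOpen_S contDiffOn_gsec cosπ_smooth n 0 zero_mem_S
  have h0 : iteratedDeriv n (fun t => gsec t * Real.cos (Real.pi * t)) 0 = 0 := by
    have hev : (fun t => gsec t * Real.cos (Real.pi * t)) =ᶠ[𝓝 (0 : ℝ)]
        (fun _ => (1 : ℝ)) := by
      filter_upwards [isOpen_S.mem_nhds zero_mem_S] with y hy
      exact inv_mul_cancel₀ hy
    rw [Filter.EventuallyEq.iteratedDeriv_eq n hev, iter_one_eq_zero n hn]
  rw [h0] at hL
  have heq : ∑ k ∈ Finset.range (n + 1), (n.choose k : ℝ) * ar k *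
      (Real.pi ^ (n - k) * ((dq (n - k) : ℚ) : ℝ)) =
      ∑ k ∈ Finset.range (n + 1), (n.choose k : ℝ) * iteratedDeriv k gsec 0 *
        iteratedDeriv (n - k) (fun t => Real.cos (Real.pi * t)) 0 := by
    refine Finset.sum_congr rfl fun k hk => ?_
    rw [iter_cosπ, cos_half_pi_mul]
    rfl
  rw [heq, ← hL]

lemma ar_eq (k : ℕ) : ar k = Real.pi ^ k * ((βq k : ℚ) : ℝ) := by
  induction k using Nat.strong_induction_on with
  | _ n ih =>
    rcases Nat.eq_zero_or_pos n with h0 | hpos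
    · subst h0
      rw [βq_zero]
      simp only [pow_zero, Rat.cast_one, mul_one]
      rw [ar, iteratedDeriv_zero, gsec, mul_zero, Real.cos_zero, inv_one]
    · have hrec := recurrence n hpos
      rw [Finset.sum_range_succ] at hrec
      have hlast : (n.choose n : ℝ) * ar n * (Real.pi ^ (n - n) * ((dq (n - n) : ℚ) : ℝ)) =
          ar n := by
        rw [Nat.choose_self, Nat.sub_self]
        norm_num [dq]
      rw [hlast] at hrec
      have hsum : ∑ k ∈ Finset.range n, (n.choose k : ℝ) * ar k *
          (Real.pi ^ (n - k) * ((dq (n - k) : ℚ) : ℝ)) =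
          Real.pi ^ n * ∑ k ∈ Finset.range n, (n.choose k : ℝ) * ((βq k : ℚ) : ℝ) *
            ((dq (n - k) : ℚ) : ℝ) := by
        rw [Finset.mul_sum]
        refine Finset.sum_congr rfl fun k hk => ?_
        have hkn : k ≤ n := le_of_lt (Finset.mem_range.mp hk)
        rw [ih k (Finset.mem_range.mp hk)]
        rw [show Real.pi ^ n = Real.pi ^ k * Real.pi ^ (n - k) from by
          rw [← pow_add]; congr 1; omega]
        ring
      rw [hsum] at hrec
      have hkey := key_sum n hpos
      have hkeyR : ∑ k ∈ Finset.range (n + 1), (n.choose k : ℝ) * ((βq k : ℚ) : ℝ) *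
          ((dq (n - k) : ℚ) : ℝ) = 0 := by
        have := congrArg (fun q : ℚ => (q : ℝ)) hkey
        push_cast at this
        convert this using 2 <;> push_cast <;> ring
      rw [Finset.sum_range_succ] at hkeyR
      have hlast2 : (n.choose n : ℝ) * ((βq n : ℚ) : ℝ) * ((dq (n - n) : ℚ) : ℝ) =
          ((βq n : ℚ) : ℝ) := by
        rw [Nat.choose_self, Nat.sub_self]
        norm_num [dq]
      rw [hlast2] at hkeyR
      have : ar n = -(Real.pi ^ n * ∑ k ∈ Finset.range n, (n.choose k : ℝ) *
          ((βq k : ℚ) : ℝ) * ((dq (n - k) : ℚ) : ℝ)) := by linarith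
      rw [this]
      have h2 : ((βq n : ℚ) : ℝ) = -∑ k ∈ Finset.range n, (n.choose k : ℝ) *
          ((βq k : ℚ) : ℝ) * ((dq (n - k) : ℚ) : ℝ) := by linarith
      rw [h2]
      ring

end AuxCsc

open Real

/-- Even-order derivatives of the cosecant function at `x = 1/2`, in terms of Bernoulli
polynomials. -/
theorem iteratedDeriv_even_csc_half (n : ℕ) (hn : 0 < n) :
    iteratedDeriv (2 * n) (fun x : ℝ => 1 / Real.sin (Real.pi * x)) (1 / 2) =
      (-1 : ℝ) ^ (n - 1) * (4 * (4 * Real.pi) ^ (2 * n) / (2 * n + 1)) *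
        ((Polynomial.eval ((1 : ℚ) / 4) (Polynomial.bernoulli (2 * n + 1)) : ℚ) : ℝ) := by
  have hfun : (fun x : ℝ => 1 / Real.sin (Real.pi * x)) =
      fun z : ℝ => AuxCsc.gsec (z + -(1 / 2 : ℝ)) := by
    funext z
    rw [AuxCsc.gsec, one_div]
    congr 1
    rw [show Real.pi * (z + -(1 / 2 : ℝ)) = Real.pi * z - Real.pi / 2 by ring]
    rw [Real.cos_sub_pi_div_two]
  rw [hfun, iteratedDeriv_comp_add_const (2 * n) AuxCsc.gsec (-(1 / 2 : ℝ))]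
  simp only []
  rw [show (1 / 2 : ℝ) + -(1 / 2 : ℝ) = 0 by norm_num]
  rw [show iteratedDeriv (2 * n) AuxCsc.gsec 0 = AuxCsc.ar (2 * n) from rfl]
  rw [AuxCsc.ar_eq (2 * n)]
  rw [AuxCsc.βq, if_pos ⟨n, by ring⟩, show 2 * n / 2 = n by omega]
  obtain ⟨m, rfl⟩ : ∃ m, n = m + 1 := ⟨n - 1, by omega⟩
  rw [show m + 1 - 1 = m by omega]
  push_cast
  rw [show ((-1 : ℝ)) ^ (m + 1 + 1) = (-1 : ℝ) ^ m by
    rw [show m + 1 + 1 = m + 2 from rfl, pow_add]; norm_num]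
  have hden : ((2 : ℝ) * (m + 1) + 1) ≠ 0 := by positivity
  field_simp
  ring
end
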